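/- arXiv:2210.13176 — 9 statements merged into one kernel-verified Lean document; each statement's English description precedes it below -/
import Mathlib

section
/- For any bounded subset M of a closed subspace X of B(Ω,Y), the extended equicontinuity characteristics satisfy ω_B(M) ≤ ω_X(M) ≤ 2 ω_B(M). -/
open Metric Set BoundedContinuousFunction

/-- Kuratowski measure of noncompactness: infimum of all `ε > 0` such that the set can be
covered by finitely many sets of diameter at most `ε`. -/
noncomputable def kurMNC {E : Type*} [PseudoMetricSpace E] (A : Set E) : ℝ :=
  sInf {ε : ℝ | 0 < ε ∧ ∃ (n : ℕ) (C : Fin n → Set E),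
    A ⊆ ⋃ i, C i ∧ ∀ i, Metric.diam (C i) ≤ ε}

/-- Hausdorff measure of noncompactness with centers of the `ε`-net restricted to `S`. -/
noncomputable def hausMNCin {E : Type*} [PseudoMetricSpace E] (S A : Set E) : ℝ :=
  sInf {ε : ℝ | 0 < ε ∧ ∃ F : Set E, F.Finite ∧ F ⊆ S ∧
    A ⊆ ⋃ y ∈ F, Metric.closedBall y ε}

/-- Hausdorff measure of noncompactness: infimum of all `ε > 0` such that the set admits a
finite `ε`-net in the whole space. -/
noncomputable def hausMNC {E : Type*} [PseudoMetricSpace E] (A : Set E) : ℝ :=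
  hausMNCin Set.univ A

/-- A finite partition of `Ω` (indexed by `Fin n`). -/
def IsPartition {Ω : Type*} {n : ℕ} (A : Fin n → Set Ω) : Prop :=
  (⋃ i, A i) = Set.univ ∧ Pairwise (Function.onFun Disjoint A)

section Defs

variable {Ω Y : Type*} [TopologicalSpace Ω] [NormedAddCommGroup Y]

/-- `M(x) = {f x : f ∈ M}`. -/
def evalSet (M : Set (Ω →ᵇ Y)) (x : Ω) : Set Y := (fun f : Ω →ᵇ Y => f x) '' M

/-- `M(Ω) = {f x : f ∈ M, x ∈ Ω}`. -/
def rangeSet (M : Set (Ω →ᵇ Y)) : Set Y := ⋃ f ∈ M, Set.range (f : Ω → Y)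

/-- `μ_α(M) = sup_{x ∈ Ω} α(M(x))`. -/
noncomputable def muAlpha (M : Set (Ω →ᵇ Y)) : ℝ := ⨆ x : Ω, kurMNC (evalSet M x)

/-- `μ_γ(M) = sup_{x ∈ Ω} γ(M(x))`. -/
noncomputable def muGamma (M : Set (Ω →ᵇ Y)) : ℝ := ⨆ x : Ω, hausMNC (evalSet M x)

/-- `ω(M)`: infimum of `ε > 0` admitting a finite partition `{A_1, …, A_n}` of `Ω` with
`diam (f '' A i) ≤ ε` for all `f ∈ M` and all `i`. -/
noncomputable def omegaPlain (M : Set (Ω →ᵇ Y)) : ℝ :=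
  sInf {ε : ℝ | 0 < ε ∧ ∃ (n : ℕ) (A : Fin n → Set Ω), IsPartition A ∧
    ∀ f ∈ M, ∀ i, Metric.diam ((f : Ω → Y) '' A i) ≤ ε}

/-- `ω_X(M)`: infimum of `ε > 0` admitting a finite partition `{A_1, …, A_n}` of `Ω` and a
finite set `{φ_1, …, φ_m} ⊆ X` such that every `f ∈ M` has some `j` with
`diam ((f - φ j) '' A i) ≤ ε` for all `i`. -/
noncomputable def omegaX (X : Set (Ω →ᵇ Y)) (M : Set (Ω →ᵇ Y)) : ℝ :=
  sInf {ε : ℝ | 0 < ε ∧ ∃ (n : ℕ) (A : Fin n → Set Ω), IsPartition A ∧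
    ∃ (m : ℕ) (φ : Fin m → (Ω →ᵇ Y)), (∀ j, φ j ∈ X) ∧
      ∀ f ∈ M, ∃ j, ∀ i, Metric.diam ((⇑(f - φ j) : Ω → Y) '' A i) ≤ ε}

end Defs

lemma diam_sub_le_aux {Ω Y : Type*} [TopologicalSpace Ω] [NormedAddCommGroup Y]
    (u v : Ω →ᵇ Y) (A : Set Ω) :
    Metric.diam (⇑(u - v) '' A) ≤ Metric.diam (⇑u '' A) + Metric.diam (⇑v '' A) := by
  have hu : Bornology.IsBounded (⇑u '' A) :=
    u.isBounded_range.subset (Set.image_subset_range _ _)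
  have hv : Bornology.IsBounded (⇑v '' A) :=
    v.isBounded_range.subset (Set.image_subset_range _ _)
  apply Metric.diam_le_of_forall_dist_le (add_nonneg Metric.diam_nonneg Metric.diam_nonneg)
  rintro p ⟨x, hx, rfl⟩ q ⟨y, hy, rfl⟩
  have h1 : dist (u x) (u y) ≤ Metric.diam (⇑u '' A) :=
    Metric.dist_le_diam_of_mem hu ⟨x, hx, rfl⟩ ⟨y, hy, rfl⟩
  have h2 : dist (v x) (v y) ≤ Metric.diam (⇑v '' A) :=
    Metric.dist_le_diam_of_mem hv ⟨x, hx, rfl⟩ ⟨y, hy, rfl⟩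
  have : dist ((u - v) x) ((u - v) y) ≤ dist (u x) (u y) + dist (v x) (v y) := by
    simp only [BoundedContinuousFunction.coe_sub, Pi.sub_apply, dist_eq_norm]
    calc ‖u x - v x - (u y - v y)‖ = ‖(u x - u y) - (v x - v y)‖ := by congr 1; abel
      _ ≤ ‖u x - u y‖ + ‖v x - v y‖ := norm_sub_le _ _
  linarith

theorem stmt6 {Ω Y : Type*} [TopologicalSpace Ω] [DiscreteTopology Ω] [Nonempty Ω]
    [NormedAddCommGroup Y] [NormedSpace ℝ Y] [CompleteSpace Y]
    (X : Submodule ℝ (Ω →ᵇ Y)) (hX : IsClosed (X : Set (Ω →ᵇ Y)))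
    (M : Set (Ω →ᵇ Y)) (hMX : M ⊆ (X : Set (Ω →ᵇ Y))) (hM : Bornology.IsBounded M) :
    omegaX Set.univ M ≤ omegaX (X : Set (Ω →ᵇ Y)) M ∧
      omegaX (X : Set (Ω →ᵇ Y)) M ≤ 2 * omegaX Set.univ M := by
  classical
  set S : Set ℝ := {ε : ℝ | 0 < ε ∧ ∃ (n : ℕ) (A : Fin n → Set Ω), IsPartition A ∧
    ∃ (m : ℕ) (φ : Fin m → (Ω →ᵇ Y)), (∀ j, φ j ∈ (Set.univ : Set (Ω →ᵇ Y))) ∧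
      ∀ f ∈ M, ∃ j, ∀ i, Metric.diam ((⇑(f - φ j) : Ω → Y) '' A i) ≤ ε} with hS
  set T : Set ℝ := {ε : ℝ | 0 < ε ∧ ∃ (n : ℕ) (A : Fin n → Set Ω), IsPartition A ∧
    ∃ (m : ℕ) (φ : Fin m → (Ω →ᵇ Y)), (∀ j, φ j ∈ (X : Set (Ω →ᵇ Y))) ∧
      ∀ f ∈ M, ∃ j, ∀ i, Metric.diam ((⇑(f - φ j) : Ω → Y) '' A i) ≤ ε} with hT
  have hSdef : omegaX (Set.univ : Set (Ω →ᵇ Y)) M = sInf S := rfl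
  have hTdef : omegaX (X : Set (Ω →ᵇ Y)) M = sInf T := rfl
  have hbddS : BddBelow S := ⟨0, fun ε hε => le_of_lt hε.1⟩
  have hbddT : BddBelow T := ⟨0, fun ε hε => le_of_lt hε.1⟩
  have hTS : T ⊆ S := by
    rintro ε ⟨hε, n, A, hA, m, φ, hφ, h⟩
    exact ⟨hε, n, A, hA, m, φ, fun j => Set.mem_univ _, h⟩
  -- T is nonempty
  obtain ⟨r, hr⟩ := hM.subset_closedBall 0
  have hTne : T.Nonempty := by
    refine ⟨2 * max r 0 + 1, ?_, 1, fun _ => Set.univ, ⟨Set.iUnion_const _, ?_⟩,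
      1, fun _ => 0, fun _ => X.zero_mem, ?_⟩
    · positivity
    · intro i j hij; exact absurd (Subsingleton.elim i j) hij
    · intro f hf
      refine ⟨0, fun i => ?_⟩
      apply Metric.diam_le_of_forall_dist_le (by positivity)
      rintro p ⟨x, -, rfl⟩ q ⟨y, -, rfl⟩
      have hfx : ‖f x‖ ≤ max r 0 := le_trans (f.norm_coe_le_norm x)
        (le_trans (by simpa [dist_eq_norm] using hr hf) (le_max_left _ _))
      have hfy : ‖f y‖ ≤ max r 0 := le_trans (f.norm_coe_le_norm y)
        (le_trans (by simpa [dist_eq_norm] using hr hf) (le_max_left _ _))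
      simp only [BoundedContinuousFunction.coe_sub, Pi.sub_apply, sub_zero,
        BoundedContinuousFunction.coe_zero, Pi.zero_apply, dist_eq_norm]
      calc ‖f x - f y‖ ≤ ‖f x‖ + ‖f y‖ := norm_sub_le _ _
        _ ≤ 2 * max r 0 + 1 := by linarith
  have hSne : S.Nonempty := hTne.mono hTS
  constructor
  · rw [hSdef, hTdef]
    exact csInf_le_csInf hbddS hTne hTS
  · rw [hSdef, hTdef]
    have key : ∀ ε ∈ S, sInf T ≤ 2 * ε := by
      rintro ε ⟨hε, n, A, hA, m, φ, -, h⟩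
      -- replace each φ j by an element of M (hence of X) when possible
      have hmem : (2 * ε) ∈ T := by
        refine ⟨by positivity, n, A, hA, m, ?_⟩
        set P : Fin m → Prop :=
          fun j => ∃ f ∈ M, ∀ i, Metric.diam ((⇑(f - φ j) : Ω → Y) '' A i) ≤ ε with hP
        set ψ : Fin m → (Ω →ᵇ Y) := fun j => if hj : P j then hj.choose else 0 with hψ
        have hψX : ∀ j, ψ j ∈ (X : Set (Ω →ᵇ Y)) := by
          intro j
          by_cases hj : P j
          · simp only [hψ, dif_pos hj]
            exact hMX hj.choose_spec.1
          · simp only [hψ, dif_neg hj]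
            exact X.zero_mem
        refine ⟨ψ, hψX, ?_⟩
        intro f hf
        obtain ⟨j, hj⟩ := h f hf
        have hPj : P j := ⟨f, hf, hj⟩
        refine ⟨j, fun i => ?_⟩
        have hψj : ψ j = hPj.choose := by simp [hψ, dif_pos hPj]
        obtain ⟨hg1, hg2⟩ := hPj.choose_spec
        have heq : f - ψ j = (f - φ j) - (ψ j - φ j) := by abel
        rw [heq]
        calc Metric.diam ((⇑((f - φ j) - (ψ j - φ j)) : Ω → Y) '' A i)
            ≤ Metric.diam ((⇑(f - φ j) : Ω → Y) '' A i)
              + Metric.diam ((⇑(ψ j - φ j) : Ω → Y) '' A i) := diam_sub_le_aux _ _ _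
          _ ≤ ε + ε := add_le_add (hj i) (by rw [hψj]; exact hg2 i)
          _ = 2 * ε := by ring
      exact csInf_le hbddT hmem
    have : sInf T / 2 ≤ sInf S := le_csInf hSne (fun ε hε => by linarith [key ε hε])
    linarith
end

section
/- If X is a Banach subspace of the space TB(Ω,Y) of totally bounded functions, then for every bounded M ⊆ X one has ω(M) = ω_X(M). -/
open Metric Set BoundedContinuousFunction

theorem stmt7 {Ω Y : Type*} [TopologicalSpace Ω] [DiscreteTopology Ω] [Nonempty Ω]
    [NormedAddCommGroup Y] [NormedSpace ℝ Y] [CompleteSpace Y]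
    (X : Submodule ℝ (Ω →ᵇ Y)) (hX : IsClosed (X : Set (Ω →ᵇ Y)))
    (hXTB : ∀ f : Ω →ᵇ Y, f ∈ X → TotallyBounded (Set.range (f : Ω → Y)))
    (M : Set (Ω →ᵇ Y)) (hMX : M ⊆ (X : Set (Ω →ᵇ Y))) (hM : Bornology.IsBounded M) :
    omegaPlain M = omegaX (X : Set (Ω →ᵇ Y)) M := by
  classical
  set S1 : Set ℝ := {ε : ℝ | 0 < ε ∧ ∃ (n : ℕ) (A : Fin n → Set Ω), IsPartition A ∧
    ∀ f ∈ M, ∀ i, Metric.diam ((f : Ω → Y) '' A i) ≤ ε} with hS1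
  set S2 : Set ℝ := {ε : ℝ | 0 < ε ∧ ∃ (n : ℕ) (A : Fin n → Set Ω), IsPartition A ∧
    ∃ (m : ℕ) (φ : Fin m → (Ω →ᵇ Y)), (∀ j, φ j ∈ (X : Set (Ω →ᵇ Y))) ∧
      ∀ f ∈ M, ∃ j, ∀ i, Metric.diam ((⇑(f - φ j) : Ω → Y) '' A i) ≤ ε} with hS2
  have hbdd1 : BddBelow S1 := ⟨0, fun ε hε => hε.1.le⟩
  have hbdd2 : BddBelow S2 := ⟨0, fun ε hε => hε.1.le⟩
  have hsub : S1 ⊆ S2 := by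
    rintro ε ⟨hεpos, n, A, hpart, hbound⟩
    refine ⟨hεpos, n, A, hpart, 1, fun _ => 0, fun _ => X.zero_mem, fun f hf => ⟨0, fun i => ?_⟩⟩
    simpa using hbound f hf i
  have hne1 : S1.Nonempty := by
    obtain ⟨C, hC⟩ := hM.exists_norm_le
    refine ⟨2 * max C 0 + 1, by positivity, 1, fun _ => Set.univ, ⟨Set.eq_univ_of_univ_subset (Set.subset_iUnion (fun _ : Fin 1 => (Set.univ : Set Ω)) 0), ?_⟩, ?_⟩
    · intro i j hij
      exact absurd (Subsingleton.elim i j) hij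
    · intro f hf i
      refine Metric.diam_le_of_forall_dist_le (by positivity) ?_
      rintro a ⟨u, -, rfl⟩ b ⟨v, -, rfl⟩
      have h1 : ‖f u‖ ≤ max C 0 := le_trans (f.norm_coe_le_norm u)
        (le_max_of_le_left (hC f hf))
      have h2 : ‖f v‖ ≤ max C 0 := le_trans (f.norm_coe_le_norm v)
        (le_max_of_le_left (hC f hf))
      calc dist (f u) (f v) = ‖f u - f v‖ := dist_eq_norm _ _
        _ ≤ ‖f u‖ + ‖f v‖ := norm_sub_le _ _
        _ ≤ 2 * max C 0 + 1 := by linarith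
  have key : ∀ ε ∈ S2, ∀ δ > (0:ℝ), ε + δ ∈ S1 := by
    rintro ε ⟨hεpos, n, A, hpart, m, φ, hφX, hφ⟩ δ hδ
    -- a finite δ/4-net for each φ j
    have hδ4 : (0:ℝ) < δ / 4 := by linarith
    have hnet : ∀ j : Fin m, ∃ t : Set Y, t.Finite ∧
        Set.range (⇑(φ j)) ⊆ ⋃ y ∈ t, Metric.ball y (δ / 4) :=
      fun j => Metric.totallyBounded_iff.mp (hXTB _ (hφX j)) _ hδ4
    choose t ht hcov using hnet
    -- choose nearest center
    have hc : ∀ (j : Fin m) (x : Ω), ∃ y : (ht j).toFinset, dist (φ j x) (y : Y) < δ / 4 := by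
      intro j x
      have := hcov j (Set.mem_range_self x)
      simp only [Set.mem_iUnion, Metric.mem_ball] at this
      obtain ⟨y, hy, hdy⟩ := this
      exact ⟨⟨y, (ht j).mem_toFinset.mpr hy⟩, hdy⟩
    choose c hcd using hc
    -- choose partition index
    have hiA : ∀ x : Ω, ∃ i, x ∈ A i := by
      intro x
      have : x ∈ ⋃ i, A i := hpart.1 ▸ Set.mem_univ x
      simpa using this
    choose iA hiA using hiA
    -- the signature map
    let κ := Fin n × (∀ j : Fin m, (ht j).toFinset)
    let σ : Ω → κ := fun x => (iA x, fun j => c j x)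
    let N := Fintype.card κ
    let e : κ ≃ Fin N := Fintype.equivFin κ
    refine ⟨by linarith, N, fun k => σ ⁻¹' {e.symm k}, ⟨?_, ?_⟩, ?_⟩
    · ext x
      simp only [Set.mem_iUnion, Set.mem_preimage, Set.mem_singleton_iff, Set.mem_univ, iff_true]
      exact ⟨e (σ x), by simp⟩
    · intro k k' hkk'
      simp only [Function.onFun, Set.disjoint_left]
      intro x hx hx'
      exact hkk' (by rw [← e.apply_symm_apply k, ← e.apply_symm_apply k',
        ← hx, ← hx'])
    · intro f hf k
      obtain ⟨j, hj⟩ := hφ f hf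
      refine Metric.diam_le_of_forall_dist_le (by linarith) ?_
      rintro a ⟨u, hu, rfl⟩ b ⟨v, hv, rfl⟩
      have hσ : σ u = σ v := by
        rw [Set.mem_preimage, Set.mem_singleton_iff] at hu hv
        rw [hu, hv]
      have hiuv : iA u = iA v := congrArg Prod.fst hσ
      have hcuv : c j u = c j v := congrFun (congrArg Prod.snd hσ) j
      -- bound dist of (f - φ j) by ε
      have hmemu : (f - φ j) u ∈ (⇑(f - φ j) : Ω → Y) '' A (iA u) :=
        Set.mem_image_of_mem _ (hiA u)
      have hmemv : (f - φ j) v ∈ (⇑(f - φ j) : Ω → Y) '' A (iA u) :=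
        Set.mem_image_of_mem _ (hiuv ▸ hiA v)
      have hbd : Bornology.IsBounded ((⇑(f - φ j) : Ω → Y) '' A (iA u)) :=
        (f - φ j).isBounded_range.subset (Set.image_subset_range _ _)
      have h1 : dist ((f - φ j) u) ((f - φ j) v) ≤ ε :=
        le_trans (Metric.dist_le_diam_of_mem hbd hmemu hmemv) (hj (iA u))
      -- bound dist of φ j by δ/2
      have h2 : dist (φ j u) (φ j v) ≤ δ / 2 := by
        have hu' := hcd j u
        have hv' := hcd j v
        rw [hcuv] at hu'
        calc dist (φ j u) (φ j v) ≤ dist (φ j u) ((c j v : Y)) + dist ((c j v : Y)) (φ j v) :=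
              dist_triangle _ _ _
          _ ≤ δ / 4 + δ / 4 := add_le_add hu'.le (dist_comm (φ j v) _ ▸ hv'.le)
          _ = δ / 2 := by ring
      have hsplit : f u - f v = ((f - φ j) u - (f - φ j) v) + (φ j u - φ j v) := by
        simp only [BoundedContinuousFunction.coe_sub, Pi.sub_apply]
        abel
      calc dist (f u) (f v) = ‖f u - f v‖ := dist_eq_norm _ _
        _ = ‖((f - φ j) u - (f - φ j) v) + (φ j u - φ j v)‖ := by rw [hsplit]
        _ ≤ ‖(f - φ j) u - (f - φ j) v‖ + ‖φ j u - φ j v‖ := norm_add_le _ _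
        _ = dist ((f - φ j) u) ((f - φ j) v) + dist (φ j u) (φ j v) := by
            rw [dist_eq_norm, dist_eq_norm]
        _ ≤ ε + δ / 2 := add_le_add h1 h2
        _ ≤ ε + δ := by linarith
  have hne2 : S2.Nonempty := hne1.mono hsub
  refine le_antisymm ?_ (csInf_le_csInf hbdd2 hne1 hsub)
  refine le_csInf hne2 ?_
  intro ε hε
  refine le_of_forall_pos_le_add ?_
  intro δ hδ
  exact csInf_le hbdd1 (key ε hε δ hδ)
end

section
/- For any bounded subset M of a Banach subspace X of B(Ω,Y), the convex hull satisfies ω_X(co M) = ω_X(M). -/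
open Metric Set BoundedContinuousFunction

private lemma imgBdd {Ω Y : Type*} [TopologicalSpace Ω] [NormedAddCommGroup Y]
    (f : Ω →ᵇ Y) (s : Set Ω) : Bornology.IsBounded ((⇑f) '' s) :=
  (isBounded_range f).subset (Set.image_subset_range _ _)

/-- Key step: if `ε` is admissible for `M`, then `ε + 2δ` is admissible for `convexHull ℝ M`. -/
private lemma key_step {Ω Y : Type*} [TopologicalSpace Ω]
    [NormedAddCommGroup Y] [NormedSpace ℝ Y]
    (X : Submodule ℝ (Ω →ᵇ Y)) (M : Set (Ω →ᵇ Y)) {ε δ : ℝ} (hδ : 0 < δ)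
    (hε : ε ∈ {ε : ℝ | 0 < ε ∧ ∃ (n : ℕ) (A : Fin n → Set Ω), IsPartition A ∧
      ∃ (m : ℕ) (φ : Fin m → (Ω →ᵇ Y)), (∀ j, φ j ∈ (X : Set (Ω →ᵇ Y))) ∧
        ∀ f ∈ M, ∃ j, ∀ i, Metric.diam ((⇑(f - φ j) : Ω → Y) '' A i) ≤ ε}) :
    (ε + 2 * δ) ∈ {η : ℝ | 0 < η ∧ ∃ (n : ℕ) (A : Fin n → Set Ω), IsPartition A ∧
      ∃ (m : ℕ) (φ : Fin m → (Ω →ᵇ Y)), (∀ j, φ j ∈ (X : Set (Ω →ᵇ Y))) ∧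
        ∀ f ∈ convexHull ℝ M, ∃ j, ∀ i,
          Metric.diam ((⇑(f - φ j) : Ω → Y) '' A i) ≤ η} := by
  obtain ⟨hεpos, n, A, hA, m, φ, hφX, hφ⟩ := hε
  set K : Set (Ω →ᵇ Y) := convexHull ℝ (Set.range φ) with hK
  have hKX : K ⊆ (X : Set (Ω →ᵇ Y)) :=
    convexHull_min (Set.range_subset_iff.2 hφX) X.convex
  have hKc : IsCompact K := (Set.finite_range φ).isCompact_convexHull (𝕜 := ℝ)
  -- finite δ-net of K inside K
  obtain ⟨t, htK, htfin, htcov⟩ := totallyBounded_iff_subset.1 hKc.totallyBounded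
    {p : (Ω →ᵇ Y) × (Ω →ᵇ Y) | dist p.1 p.2 < δ} (Metric.dist_mem_uniformity hδ)
  -- every element of the convex hull is ε-approximated by an element of K
  have key : ∀ f ∈ convexHull ℝ M, ∃ g ∈ K, ∀ i,
      Metric.diam ((⇑(f - g) : Ω → Y) '' A i) ≤ ε := by
    intro f hf
    refine convexHull_min (s := M)
      (t := {f : Ω →ᵇ Y | ∃ g ∈ K, ∀ i, Metric.diam ((⇑(f - g) : Ω → Y) '' A i) ≤ ε})
      ?_ ?_ hf
    · intro f hfM
      obtain ⟨j, hj⟩ := hφ f hfM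
      exact ⟨φ j, subset_convexHull ℝ _ (Set.mem_range_self j), hj⟩
    · intro f₁ h₁ f₂ h₂ a b ha hb hab
      obtain ⟨g₁, hg₁K, hg₁⟩ := h₁
      obtain ⟨g₂, hg₂K, hg₂⟩ := h₂
      refine ⟨a • g₁ + b • g₂, (convex_convexHull ℝ _) hg₁K hg₂K ha hb hab, fun i => ?_⟩
      apply Metric.diam_le_of_forall_dist_le hεpos.le
      rintro u ⟨x, hx, rfl⟩ v ⟨y, hy, rfl⟩
      have h1 : dist ((f₁ - g₁) x) ((f₁ - g₁) y) ≤ ε :=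
        le_trans (Metric.dist_le_diam_of_mem (imgBdd _ _)
          (Set.mem_image_of_mem _ hx) (Set.mem_image_of_mem _ hy)) (hg₁ i)
      have h2 : dist ((f₂ - g₂) x) ((f₂ - g₂) y) ≤ ε :=
        le_trans (Metric.dist_le_diam_of_mem (imgBdd _ _)
          (Set.mem_image_of_mem _ hx) (Set.mem_image_of_mem _ hy)) (hg₂ i)
      rw [dist_eq_norm] at h1 h2 ⊢
      have heq : ((a • f₁ + b • f₂) - (a • g₁ + b • g₂)) x
            - ((a • f₁ + b • f₂) - (a • g₁ + b • g₂)) y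
          = a • ((f₁ - g₁) x - (f₁ - g₁) y) + b • ((f₂ - g₂) x - (f₂ - g₂) y) := by
        simp only [BoundedContinuousFunction.coe_sub, BoundedContinuousFunction.coe_add,
          BoundedContinuousFunction.coe_smul, Pi.sub_apply, Pi.add_apply, Pi.smul_apply,
          smul_sub]
        abel
      calc ‖((a • f₁ + b • f₂) - (a • g₁ + b • g₂)) x
            - ((a • f₁ + b • f₂) - (a • g₁ + b • g₂)) y‖
          = ‖a • ((f₁ - g₁) x - (f₁ - g₁) y) + b • ((f₂ - g₂) x - (f₂ - g₂) y)‖ := by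
            rw [heq]
        _ ≤ ‖a • ((f₁ - g₁) x - (f₁ - g₁) y)‖ + ‖b • ((f₂ - g₂) x - (f₂ - g₂) y)‖ :=
            norm_add_le _ _
        _ ≤ a * ε + b * ε := by
            rw [norm_smul, norm_smul, Real.norm_of_nonneg ha, Real.norm_of_nonneg hb]
            exact add_le_add (mul_le_mul_of_nonneg_left h1 ha)
              (mul_le_mul_of_nonneg_left h2 hb)
        _ = ε := by rw [← add_mul, hab, one_mul]
  -- enumerate the net
  set p : ℕ := htfin.toFinset.card with hp
  set e : Fin p → (Ω →ᵇ Y) := fun k => (htfin.toFinset.equivFin.symm k : Ω →ᵇ Y) with he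
  have heMem : ∀ k, e k ∈ t := fun k => htfin.mem_toFinset.1 (htfin.toFinset.equivFin.symm k).2
  refine ⟨by linarith, n, A, hA, p, e, fun k => hKX (htK (heMem k)), ?_⟩
  intro f hf
  obtain ⟨g, hgK, hg⟩ := key f hf
  obtain ⟨y, hyt, hgy⟩ := Set.mem_iUnion₂.1 (htcov hgK)
  have hgy : dist g y < δ := hgy
  -- find the index of y
  refine ⟨htfin.toFinset.equivFin ⟨y, htfin.mem_toFinset.2 hyt⟩, fun i => ?_⟩
  have hey : e (htfin.toFinset.equivFin ⟨y, htfin.mem_toFinset.2 hyt⟩) = y := by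
    simp [he]
  rw [hey]
  apply Metric.diam_le_of_forall_dist_le (by linarith)
  rintro u ⟨x, hx, rfl⟩ v ⟨x', hx', rfl⟩
  have h1 : dist ((f - g) x) ((f - g) x') ≤ ε :=
    le_trans (Metric.dist_le_diam_of_mem (imgBdd _ _)
      (Set.mem_image_of_mem _ hx) (Set.mem_image_of_mem _ hx')) (hg i)
  have h2 : ∀ z : Ω, ‖g z - y z‖ ≤ δ := by
    intro z
    rw [← dist_eq_norm]
    exact le_trans (BoundedContinuousFunction.dist_coe_le_dist z) hgy.le
  rw [dist_eq_norm] at h1 ⊢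
  have heq : (f - y) x - (f - y) x'
      = ((f - g) x - (f - g) x') + ((g x - y x) - (g x' - y x')) := by
    simp only [BoundedContinuousFunction.coe_sub, Pi.sub_apply]
    abel
  calc ‖(f - y) x - (f - y) x'‖
      = ‖((f - g) x - (f - g) x') + ((g x - y x) - (g x' - y x'))‖ := by rw [heq]
    _ ≤ ‖(f - g) x - (f - g) x'‖ + (‖g x - y x‖ + ‖g x' - y x'‖) :=
        le_trans (norm_add_le _ _) (by gcongr; exact norm_sub_le _ _)
    _ ≤ ε + (δ + δ) := add_le_add h1 (add_le_add (h2 x) (h2 x'))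
    _ = ε + 2 * δ := by ring

theorem stmt9 {Ω Y : Type*} [TopologicalSpace Ω] [DiscreteTopology Ω] [Nonempty Ω]
    [NormedAddCommGroup Y] [NormedSpace ℝ Y] [CompleteSpace Y]
    (X : Submodule ℝ (Ω →ᵇ Y)) (hX : IsClosed (X : Set (Ω →ᵇ Y)))
    (M : Set (Ω →ᵇ Y)) (hMX : M ⊆ (X : Set (Ω →ᵇ Y))) (hM : Bornology.IsBounded M) :
    omegaX (X : Set (Ω →ᵇ Y)) (convexHull ℝ M) = omegaX (X : Set (Ω →ᵇ Y)) M := by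
  set S := {ε : ℝ | 0 < ε ∧ ∃ (n : ℕ) (A : Fin n → Set Ω), IsPartition A ∧
      ∃ (m : ℕ) (φ : Fin m → (Ω →ᵇ Y)), (∀ j, φ j ∈ (X : Set (Ω →ᵇ Y))) ∧
        ∀ f ∈ M, ∃ j, ∀ i, Metric.diam ((⇑(f - φ j) : Ω → Y) '' A i) ≤ ε} with hS
  set T := {ε : ℝ | 0 < ε ∧ ∃ (n : ℕ) (A : Fin n → Set Ω), IsPartition A ∧
      ∃ (m : ℕ) (φ : Fin m → (Ω →ᵇ Y)), (∀ j, φ j ∈ (X : Set (Ω →ᵇ Y))) ∧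
        ∀ f ∈ convexHull ℝ M, ∃ j, ∀ i,
          Metric.diam ((⇑(f - φ j) : Ω → Y) '' A i) ≤ ε} with hT
  have hTS : T ⊆ S := by
    rintro ε ⟨hpos, n, A, hA, m, φ, hφX, h⟩
    exact ⟨hpos, n, A, hA, m, φ, hφX, fun f hf => h f (subset_convexHull ℝ M hf)⟩
  have hbddS : BddBelow S := ⟨0, fun x hx => hx.1.le⟩
  have hbddT : BddBelow T := ⟨0, fun x hx => hx.1.le⟩
  have homX : omegaX (X : Set (Ω →ᵇ Y)) (convexHull ℝ M) = sInf T := rfl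
  have homXM : omegaX (X : Set (Ω →ᵇ Y)) M = sInf S := rfl
  rw [homX, homXM]
  rcases Set.eq_empty_or_nonempty S with hSe | hSne
  · have hTe : T = ∅ := Set.eq_empty_of_subset_empty (hSe ▸ hTS)
    rw [hSe, hTe]
  · have hTne : T.Nonempty := by
      obtain ⟨ε, hε⟩ := hSne
      exact ⟨ε + 2 * 1, key_step X M one_pos hε⟩
    apply le_antisymm
    · apply le_csInf hSne
      intro ε hε
      refine le_of_forall_pos_le_add fun δ hδ => ?_
      have := key_step X M (half_pos hδ) hε
      have h2 : ε + 2 * (δ / 2) ∈ T := this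
      calc sInf T ≤ ε + 2 * (δ / 2) := csInf_le hbddT h2
        _ = ε + δ := by ring
    · exact csInf_le_csInf hbddS hTne hTS
end

section
/- For λ ∈ [0,1] and bounded subsets M, N of a Banach subspace X of B(Ω,Y), ω_X(λM + (1−λ)N) ≤ λ ω_X(M) + (1−λ) ω_X(N). -/
open Metric Set BoundedContinuousFunction

lemma IsPartition.refine {Ω : Type*} {n m : ℕ} {A : Fin n → Set Ω} {B : Fin m → Set Ω}
    (hA : IsPartition A) (hB : IsPartition B) :
    IsPartition (fun p : Fin (n * m) =>
      A (finProdFinEquiv.symm p).1 ∩ B (finProdFinEquiv.symm p).2) := by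
  constructor
  · ext x
    simp only [mem_iUnion, mem_univ, iff_true, mem_inter_iff]
    have hx1 : x ∈ ⋃ i, A i := hA.1 ▸ mem_univ x
    have hx2 : x ∈ ⋃ i, B i := hB.1 ▸ mem_univ x
    obtain ⟨i, hi⟩ := mem_iUnion.mp hx1
    obtain ⟨j, hj⟩ := mem_iUnion.mp hx2
    exact ⟨finProdFinEquiv (i, j), by simpa using ⟨hi, hj⟩⟩
  · intro p q hpq
    have hne : finProdFinEquiv.symm p ≠ finProdFinEquiv.symm q :=
      fun h => hpq (finProdFinEquiv.symm.injective h)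
    by_cases h1 : (finProdFinEquiv.symm p).1 = (finProdFinEquiv.symm q).1
    · have h2 : (finProdFinEquiv.symm p).2 ≠ (finProdFinEquiv.symm q).2 := by
        intro h2; exact hne (Prod.ext h1 h2)
      exact (hB.2 h2).mono inter_subset_right inter_subset_right
    · exact (hA.2 h1).mono inter_subset_left inter_subset_left

lemma omegaX_set_nonempty {Ω Y : Type*} [TopologicalSpace Ω] [NormedAddCommGroup Y]
    (X : Set (Ω →ᵇ Y)) (h0 : (0 : Ω →ᵇ Y) ∈ X) (M : Set (Ω →ᵇ Y))
    (hM : Bornology.IsBounded M) :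
    {ε : ℝ | 0 < ε ∧ ∃ (n : ℕ) (A : Fin n → Set Ω), IsPartition A ∧
      ∃ (m : ℕ) (φ : Fin m → (Ω →ᵇ Y)), (∀ j, φ j ∈ X) ∧
        ∀ f ∈ M, ∃ j, ∀ i, Metric.diam ((⇑(f - φ j) : Ω → Y) '' A i) ≤ ε}.Nonempty := by
  obtain ⟨R, hR⟩ := hM.exists_norm_le
  refine ⟨2 * max R 0 + 1, by positivity, 1, fun _ => univ,
    ⟨iUnion_const univ, Subsingleton.pairwise⟩,
    1, fun _ => 0, fun _ => h0, fun f hf => ⟨0, fun i => ?_⟩⟩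
  apply diam_le_of_forall_dist_le (by positivity)
  rintro u ⟨x, -, rfl⟩ v ⟨y, -, rfl⟩
  calc dist ((f - 0) x) ((f - 0) y) ≤ 2 * ‖f - 0‖ := (f - 0).dist_le_two_norm x y
    _ = 2 * ‖f‖ := by rw [sub_zero]
    _ ≤ 2 * max R 0 := by
        have h1 : ‖f‖ ≤ max R 0 := le_trans (hR f hf) (le_max_left _ _)
        linarith
    _ ≤ 2 * max R 0 + 1 := by linarith

theorem stmt10 {Ω Y : Type*} [TopologicalSpace Ω] [DiscreteTopology Ω] [Nonempty Ω]
    [NormedAddCommGroup Y] [NormedSpace ℝ Y] [CompleteSpace Y]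
    (X : Submodule ℝ (Ω →ᵇ Y)) (hX : IsClosed (X : Set (Ω →ᵇ Y)))
    (M N : Set (Ω →ᵇ Y)) (hMX : M ⊆ (X : Set (Ω →ᵇ Y))) (hNX : N ⊆ (X : Set (Ω →ᵇ Y)))
    (hM : Bornology.IsBounded M) (hN : Bornology.IsBounded N)
    (lam : ℝ) (hlam : lam ∈ Set.Icc (0 : ℝ) 1) :
    omegaX (X : Set (Ω →ᵇ Y)) (Set.image2 (fun f g : Ω →ᵇ Y => lam • f + (1 - lam) • g) M N) ≤
      lam * omegaX (X : Set (Ω →ᵇ Y)) M + (1 - lam) * omegaX (X : Set (Ω →ᵇ Y)) N := by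
  obtain ⟨hl0, hl1⟩ := hlam
  have hl1' : (0:ℝ) ≤ 1 - lam := by linarith
  set S : Set (Ω →ᵇ Y) → Set ℝ := fun M =>
    {ε : ℝ | 0 < ε ∧ ∃ (n : ℕ) (A : Fin n → Set Ω), IsPartition A ∧
      ∃ (m : ℕ) (φ : Fin m → (Ω →ᵇ Y)), (∀ j, φ j ∈ (X : Set (Ω →ᵇ Y))) ∧
        ∀ f ∈ M, ∃ j, ∀ i, Metric.diam ((⇑(f - φ j) : Ω → Y) '' A i) ≤ ε} with hS
  have hbdd : ∀ K, BddBelow (S K) := fun K => ⟨0, fun ε hε => hε.1.le⟩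
  have hMne : (S M).Nonempty := omegaX_set_nonempty _ (Submodule.zero_mem X) M hM
  have hNne : (S N).Nonempty := omegaX_set_nonempty _ (Submodule.zero_mem X) N hN
  -- key combination step
  have key : ∀ ε₁ ∈ S M, ∀ ε₂ ∈ S N, lam * ε₁ + (1 - lam) * ε₂ ∈
      S (Set.image2 (fun f g : Ω →ᵇ Y => lam • f + (1 - lam) • g) M N) := by
    rintro ε₁ ⟨hε₁, n₁, A, hA, m₁, φ, hφ, hMcov⟩ ε₂ ⟨hε₂, n₂, B, hB, m₂, ψ, hψ, hNcov⟩
    have hpos : 0 < lam * ε₁ + (1 - lam) * ε₂ := by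
      rcases eq_or_lt_of_le hl0 with h | h
      · have : 1 - lam = 1 := by rw [← h]; ring
        nlinarith
      · nlinarith
    refine ⟨hpos, n₁ * n₂, _, hA.refine hB, m₁ * m₂,
      fun q => lam • φ (finProdFinEquiv.symm q).1 + (1 - lam) • ψ (finProdFinEquiv.symm q).2,
      fun q => X.add_mem (X.smul_mem _ (hφ _)) (X.smul_mem _ (hψ _)), ?_⟩
    rintro h ⟨f, hf, g, hg, rfl⟩
    obtain ⟨j₁, hj₁⟩ := hMcov f hf
    obtain ⟨j₂, hj₂⟩ := hNcov g hg
    refine ⟨finProdFinEquiv (j₁, j₂), fun p => ?_⟩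
    simp only [Equiv.symm_apply_apply]
    apply diam_le_of_forall_dist_le hpos.le
    rintro u ⟨x, hx, rfl⟩ v ⟨y, hy, rfl⟩
    have hbf : Bornology.IsBounded ((⇑(f - φ j₁) : Ω → Y) '' A (finProdFinEquiv.symm p).1) :=
      (f - φ j₁).isBounded_range.subset (image_subset_range _ _)
    have hbg : Bornology.IsBounded ((⇑(g - ψ j₂) : Ω → Y) '' B (finProdFinEquiv.symm p).2) :=
      (g - ψ j₂).isBounded_range.subset (image_subset_range _ _)
    have hdf : dist ((f - φ j₁) x) ((f - φ j₁) y) ≤ ε₁ :=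
      le_trans (dist_le_diam_of_mem hbf (mem_image_of_mem _ hx.1) (mem_image_of_mem _ hy.1))
        (hj₁ _)
    have hdg : dist ((g - ψ j₂) x) ((g - ψ j₂) y) ≤ ε₂ :=
      le_trans (dist_le_diam_of_mem hbg (mem_image_of_mem _ hx.2) (mem_image_of_mem _ hy.2))
        (hj₂ _)
    have hrw : ∀ z : Ω,
        ((lam • f + (1 - lam) • g) - (lam • φ j₁ + (1 - lam) • ψ j₂)) z
          = lam • ((f - φ j₁) z) + (1 - lam) • ((g - ψ j₂) z) := by
      intro z
      simp [smul_sub]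
      abel
    rw [dist_eq_norm]
    simp only [hrw]
    have : lam • ((f - φ j₁) x) + (1 - lam) • ((g - ψ j₂) x)
        - (lam • ((f - φ j₁) y) + (1 - lam) • ((g - ψ j₂) y))
        = lam • ((f - φ j₁) x - (f - φ j₁) y) + (1 - lam) • ((g - ψ j₂) x - (g - ψ j₂) y) := by
      rw [smul_sub, smul_sub]; abel
    rw [this]
    calc ‖lam • ((f - φ j₁) x - (f - φ j₁) y) + (1 - lam) • ((g - ψ j₂) x - (g - ψ j₂) y)‖
        ≤ ‖lam • ((f - φ j₁) x - (f - φ j₁) y)‖ + ‖(1 - lam) • ((g - ψ j₂) x - (g - ψ j₂) y)‖ :=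
          norm_add_le _ _
      _ = lam * ‖(f - φ j₁) x - (f - φ j₁) y‖ + (1 - lam) * ‖(g - ψ j₂) x - (g - ψ j₂) y‖ := by
          rw [norm_smul, norm_smul, Real.norm_of_nonneg hl0, Real.norm_of_nonneg hl1']
      _ ≤ lam * ε₁ + (1 - lam) * ε₂ := by
          rw [dist_eq_norm] at hdf hdg
          gcongr
  -- conclude
  rw [omegaX, omegaX, omegaX]
  show sInf (S (Set.image2 (fun f g : Ω →ᵇ Y => lam • f + (1 - lam) • g) M N)) ≤
    lam * sInf (S M) + (1 - lam) * sInf (S N)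
  apply le_of_forall_pos_le_add
  intro δ hδ
  obtain ⟨ε₁, hε₁, hε₁'⟩ := Real.lt_sInf_add_pos hMne (half_pos hδ)
  obtain ⟨ε₂, hε₂, hε₂'⟩ := Real.lt_sInf_add_pos hNne (half_pos hδ)
  have hle := csInf_le (hbdd _) (key ε₁ hε₁ ε₂ hε₂)
  have h1 : lam * ε₁ ≤ lam * (sInf (S M) + δ/2) := by nlinarith
  have h2 : (1 - lam) * ε₂ ≤ (1 - lam) * (sInf (S N) + δ/2) := by nlinarith
  calc sInf (S (Set.image2 (fun f g : Ω →ᵇ Y => lam • f + (1 - lam) • g) M N))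
      ≤ lam * ε₁ + (1 - lam) * ε₂ := hle
    _ ≤ lam * (sInf (S M) + δ/2) + (1 - lam) * (sInf (S N) + δ/2) := by linarith
    _ = lam * sInf (S M) + (1 - lam) * sInf (S N) + δ/2 := by ring
    _ ≤ lam * sInf (S M) + (1 - lam) * sInf (S N) + δ := by linarith
end

section
/- A subset M of a Banach subspace X of B(Ω,Y) is relatively compact (in supremum norm) if and only if M is bounded, extendedly equicontinuous (ω_X(M) = 0), and pointwise relatively compact (M(x) is relatively compact in Y for each x ∈ Ω). -/
open Metric Set BoundedContinuousFunction

section Aux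

variable {Ω Y : Type*} [TopologicalSpace Ω] [NormedAddCommGroup Y]

/-- If the image of a set under a bounded function has diameter `≤ δ`, then any two values on
the set are within `δ` of each other. -/
lemma dist_le_of_diam_image_le (h : Ω →ᵇ Y) {s : Set Ω} {δ : ℝ}
    (hd : Metric.diam ((h : Ω → Y) '' s) ≤ δ) {a b : Ω} (ha : a ∈ s) (hb : b ∈ s) :
    dist (h a) (h b) ≤ δ :=
  (Metric.dist_le_diam_of_mem (h.isBounded_range.subset (Set.image_subset_range _ _))
    ⟨a, ha, rfl⟩ ⟨b, hb, rfl⟩).trans hd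

/-- Diameter bound for the image of a difference in terms of the sup distance. -/
lemma diam_sub_image_le (f g : Ω →ᵇ Y) {C : ℝ} (hC : 0 ≤ C) (hfg : dist f g ≤ C)
    (s : Set Ω) : Metric.diam ((⇑(f - g) : Ω → Y) '' s) ≤ 2 * C := by
  apply Metric.diam_le_of_forall_dist_le (by positivity)
  rintro _ ⟨a, -, rfl⟩ _ ⟨b, -, rfl⟩
  have h1 : dist ((f - g) a) ((f - g) b) ≤ ‖(f - g) a‖ + ‖(f - g) b‖ := by
    rw [dist_eq_norm]
    exact (norm_sub_le _ _)
  have h2 : ∀ z : Ω, ‖(f - g) z‖ ≤ C := by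
    intro z
    have : (f - g) z = f z - g z := rfl
    rw [this, ← dist_eq_norm]
    exact (dist_coe_le_dist z).trans hfg
  calc dist ((f - g) a) ((f - g) b) ≤ ‖(f - g) a‖ + ‖(f - g) b‖ := h1
    _ ≤ C + C := add_le_add (h2 a) (h2 b)
    _ = 2 * C := by ring

end Aux

theorem stmt12 {Ω Y : Type*} [TopologicalSpace Ω] [DiscreteTopology Ω] [Nonempty Ω]
    [NormedAddCommGroup Y] [NormedSpace ℝ Y] [CompleteSpace Y]
    (X : Submodule ℝ (Ω →ᵇ Y)) (hX : IsClosed (X : Set (Ω →ᵇ Y)))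
    (M : Set (Ω →ᵇ Y)) (hMX : M ⊆ (X : Set (Ω →ᵇ Y))) :
    IsCompact (closure M) ↔
      (Bornology.IsBounded M ∧ omegaX (X : Set (Ω →ᵇ Y)) M = 0 ∧
        ∀ x : Ω, IsCompact (closure (evalSet M x))) := by
  set S : Set ℝ := {ε : ℝ | 0 < ε ∧ ∃ (n : ℕ) (A : Fin n → Set Ω), IsPartition A ∧
    ∃ (m : ℕ) (φ : Fin m → (Ω →ᵇ Y)), (∀ j, φ j ∈ (X : Set (Ω →ᵇ Y))) ∧
      ∀ f ∈ M, ∃ j, ∀ i, Metric.diam ((⇑(f - φ j) : Ω → Y) '' A i) ≤ ε} with hS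
  have hSdef : omegaX (X : Set (Ω →ᵇ Y)) M = sInf S := rfl
  have hpart1 : IsPartition (fun _ : Fin 1 => (Set.univ : Set Ω)) := by
    refine ⟨by simpa using Set.iUnion_const (Set.univ : Set Ω), fun i j hij => absurd (Subsingleton.elim i j) hij⟩
  constructor
  · -- forward direction
    intro hc
    refine ⟨hc.isBounded.subset subset_closure, ?_, ?_⟩
    · -- omegaX = 0
      have hmem : ∀ η : ℝ, 0 < η → η ∈ S := by
        intro η hη
        have htb : TotallyBounded M := (hc.totallyBounded).subset subset_closure
        obtain ⟨t, htM, htfin, hcov⟩ := totallyBounded_iff_subset.1 htb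
          {p : (Ω →ᵇ Y) × (Ω →ᵇ Y) | dist p.1 p.2 < η / 2} (dist_mem_uniformity (by linarith))
        classical
        set l := htfin.toFinset.toList with hl
        refine ⟨hη, 1, fun _ => Set.univ, hpart1, l.length, fun j => l.get j, ?_, ?_⟩
        · intro j
          have : l.get j ∈ t :=
            (Set.Finite.mem_toFinset htfin).1 (Finset.mem_toList.1 (List.get_mem l j))
          exact hMX (htM this)
        · intro f hf
          obtain ⟨y, hyt, hfy⟩ := Set.mem_iUnion₂.1 (hcov hf)
          have hyl : y ∈ l := by
            show y ∈ htfin.toFinset.toList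
            rw [Finset.mem_toList, Set.Finite.mem_toFinset htfin]; exact hyt
          obtain ⟨j, hj⟩ := List.mem_iff_get.1 hyl
          refine ⟨j, fun i => ?_⟩
          have hj' : (fun j => l.get j) j = y := hj
          rw [hj']
          have := diam_sub_image_le f y (C := η / 2) (by linarith) (le_of_lt hfy) Set.univ
          calc Metric.diam ((⇑(f - y) : Ω → Y) '' Set.univ) ≤ 2 * (η / 2) := this
            _ = η := by ring
      rw [hSdef]
      apply le_antisymm
      · apply le_of_forall_pos_le_add
        intro η hη
        have : sInf S ≤ η := csInf_le ⟨0, fun x hx => hx.1.le⟩ (hmem η hη)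
        linarith
      · exact Real.sInf_nonneg fun x hx => hx.1.le
    · -- pointwise compactness
      intro x
      have hcont : Continuous fun f : Ω →ᵇ Y => f x := (continuous_eval_const x)
      have himg : IsCompact ((fun f : Ω →ᵇ Y => f x) '' closure M) := hc.image hcont
      refine himg.of_isClosed_subset isClosed_closure ?_
      refine closure_minimal ?_ himg.isClosed
      exact Set.image_mono subset_closure
  · -- reverse direction
    rintro ⟨hbdd, homega, hptc⟩
    -- S is nonempty
    have hSne : S.Nonempty := by
      rcases M.eq_empty_or_nonempty with hM | ⟨f0, hf0⟩
      · exact ⟨1, one_pos, 1, fun _ => Set.univ, hpart1, 0, Fin.elim0, fun j => j.elim0,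
          fun f hf => by rw [hM] at hf; exact absurd hf (Set.notMem_empty f)⟩
      · obtain ⟨C, hC⟩ := Metric.isBounded_iff.1 hbdd
        have hC0 : 0 ≤ C := le_trans dist_nonneg (hC hf0 hf0)
        refine ⟨2 * (‖f0‖ + C) + 1, by positivity, 1, fun _ => Set.univ, hpart1, 1,
          fun _ => 0, fun _ => X.zero_mem, fun f hf => ⟨0, fun i => ?_⟩⟩
        have hfn : dist f 0 ≤ ‖f0‖ + C := by
          calc dist f 0 ≤ dist f f0 + dist f0 0 := dist_triangle _ _ _
            _ ≤ C + ‖f0‖ := by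
                have h1 : dist f f0 ≤ C := hC hf hf0
                have h2 : dist f0 0 = ‖f0‖ := by simp
                linarith
            _ = ‖f0‖ + C := by ring
        have := diam_sub_image_le f 0 (C := ‖f0‖ + C) (by positivity) hfn Set.univ
        calc Metric.diam ((⇑(f - 0) : Ω → Y) '' Set.univ) ≤ 2 * (‖f0‖ + C) := this
          _ ≤ 2 * (‖f0‖ + C) + 1 := by linarith
    -- extraction of small elements of S
    have hsmall : ∀ ε : ℝ, 0 < ε → ∃ δ ∈ S, δ < ε := by
      intro ε hε
      by_contra h
      push_neg at h
      have h1 : ε ≤ sInf S := le_csInf hSne h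
      have h0 : sInf S = 0 := by rw [← hSdef]; exact homega
      linarith
    -- totally bounded
    have htb : TotallyBounded M := by
      rw [Metric.totallyBounded_iff]
      intro ε hε
      obtain ⟨δ, hδS, hδε⟩ := hsmall (ε / 5) (by linarith)
      obtain ⟨hδ0, n, A, ⟨hAcov, -⟩, m, φ, -, hP⟩ := hδS
      classical
      -- choose representative points
      have hxch : ∀ i : Fin n, ∃ x : Ω, (A i).Nonempty → x ∈ A i := by
        intro i
        rcases (A i).eq_empty_or_nonempty with h | ⟨x, hx⟩
        · exact ⟨Classical.arbitrary Ω, fun hne => absurd h (Set.nonempty_iff_ne_empty.1 hne)⟩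
        · exact ⟨x, fun _ => hx⟩
      choose x hx using hxch
      -- finite nets pointwise
      have htbi : ∀ i : Fin n, ∃ t : Set Y, t.Finite ∧
          evalSet M (x i) ⊆ ⋃ y ∈ t, Metric.ball y δ := by
        intro i
        have := ((hptc (x i)).totallyBounded).subset subset_closure
        exact Metric.totallyBounded_iff.1 this δ hδ0
      choose t htfin hcov using htbi
      -- choices for each f ∈ M
      have hjch : ∀ f : M, ∃ j : Fin m, ∀ i,
          Metric.diam ((⇑((f : Ω →ᵇ Y) - φ j) : Ω → Y) '' A i) ≤ δ := fun f => hP f f.2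
      choose j hj using hjch
      have hvch : ∀ (f : M) (i : Fin n), ∃ y ∈ t i, dist ((f : Ω →ᵇ Y) (x i)) y < δ := by
        intro f i
        have hmem : (f : Ω →ᵇ Y) (x i) ∈ evalSet M (x i) := ⟨f, f.2, rfl⟩
        have := hcov i hmem
        obtain ⟨y, hy, hball⟩ := Set.mem_iUnion₂.1 this
        exact ⟨y, hy, by simpa [Metric.mem_ball] using hball⟩
      choose v hvt hvd using hvch
      -- coding map
      set Ψ : M → Fin m × (Fin n → Y) := fun f => (j f, fun i => v f i) with hΨ
      have hfinrange : (Set.range Ψ).Finite := by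
        apply Set.Finite.subset ((Set.finite_univ (α := Fin m)).prod
          (Set.Finite.pi fun i => htfin i))
        rintro _ ⟨f, rfl⟩
        exact ⟨Set.mem_univ _, fun i _ => hvt f i⟩
      -- key estimate: same code ⇒ close
      have hkey : ∀ f g : M, Ψ f = Ψ g → dist (f : Ω →ᵇ Y) (g : Ω →ᵇ Y) ≤ 4 * δ := by
        intro f g hfg
        have hjfg : j f = j g := congrArg Prod.fst hfg
        have hvfg : ∀ i, v f i = v g i := fun i => congrFun (congrArg Prod.snd hfg) i
        rw [BoundedContinuousFunction.dist_le (by linarith)]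
        intro z
        have hz : ∃ i, z ∈ A i := by
          have : z ∈ ⋃ i, A i := hAcov ▸ Set.mem_univ z
          exact Set.mem_iUnion.1 this
        obtain ⟨i, hzi⟩ := hz
        have hxi : x i ∈ A i := hx i ⟨z, hzi⟩
        have h1 : dist (((f : Ω →ᵇ Y) - φ (j f)) z) (((f : Ω →ᵇ Y) - φ (j f)) (x i)) ≤ δ :=
          dist_le_of_diam_image_le _ (hj f i) hzi hxi
        have h2 : dist (((g : Ω →ᵇ Y) - φ (j g)) z) (((g : Ω →ᵇ Y) - φ (j g)) (x i)) ≤ δ :=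
          dist_le_of_diam_image_le _ (hj g i) hzi hxi
        have h3 : dist ((f : Ω →ᵇ Y) (x i)) ((g : Ω →ᵇ Y) (x i)) ≤ 2 * δ := by
          calc dist ((f : Ω →ᵇ Y) (x i)) ((g : Ω →ᵇ Y) (x i))
              ≤ dist ((f : Ω →ᵇ Y) (x i)) (v f i) + dist (v g i) ((g : Ω →ᵇ Y) (x i)) := by
                rw [hvfg i]; exact dist_triangle _ _ _
            _ ≤ δ + δ := add_le_add (le_of_lt (hvd f i)) (le_of_lt (by rw [dist_comm]; exact hvd g i))
            _ = 2 * δ := by ring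
        have expand : (f : Ω →ᵇ Y) z - (g : Ω →ᵇ Y) z =
            (((f : Ω →ᵇ Y) - φ (j f)) z - ((f : Ω →ᵇ Y) - φ (j f)) (x i)) +
            ((f : Ω →ᵇ Y) (x i) - (g : Ω →ᵇ Y) (x i)) +
            (((g : Ω →ᵇ Y) - φ (j g)) (x i) - ((g : Ω →ᵇ Y) - φ (j g)) z) := by
          simp only [BoundedContinuousFunction.coe_sub, Pi.sub_apply]
          rw [hjfg]
          abel
        calc dist ((f : Ω →ᵇ Y) z) ((g : Ω →ᵇ Y) z)
            = ‖(f : Ω →ᵇ Y) z - (g : Ω →ᵇ Y) z‖ := dist_eq_norm _ _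
          _ ≤ ‖((f : Ω →ᵇ Y) - φ (j f)) z - ((f : Ω →ᵇ Y) - φ (j f)) (x i)‖ +
              ‖(f : Ω →ᵇ Y) (x i) - (g : Ω →ᵇ Y) (x i)‖ +
              ‖((g : Ω →ᵇ Y) - φ (j g)) (x i) - ((g : Ω →ᵇ Y) - φ (j g)) z‖ := by
                rw [expand]; exact norm_add₃_le
          _ ≤ δ + 2 * δ + δ := by
                refine add_le_add (add_le_add ?_ ?_) ?_
                · rw [← dist_eq_norm]; exact h1
                · rw [← dist_eq_norm]; exact h3
                · rw [← dist_eq_norm, dist_comm]; exact h2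
          _ = 4 * δ := by ring
      -- build the net
      haveI : Finite ↥(Set.range Ψ) := hfinrange.to_subtype
      set u : ↥(Set.range Ψ) → (Ω →ᵇ Y) := fun p => (p.2.choose : Ω →ᵇ Y) with hu
      refine ⟨Set.range u, Set.finite_range u, ?_⟩
      intro f hf
      set fM : M := ⟨f, hf⟩ with hfM
      set p : ↥(Set.range Ψ) := ⟨Ψ fM, ⟨fM, rfl⟩⟩ with hp
      have hspec : Ψ p.2.choose = Ψ fM := p.2.choose_spec
      have : dist f (u p) ≤ 4 * δ := by
        have := hkey fM p.2.choose hspec.symm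
        simpa [hu] using this
      refine Set.mem_iUnion₂.2 ⟨u p, ⟨p, rfl⟩, ?_⟩
      rw [Metric.mem_ball]
      calc dist f (u p) ≤ 4 * δ := this
        _ < 4 * (ε / 5) := by linarith
        _ < ε := by linarith
    exact TotallyBounded.isCompact_of_isClosed htb.closure isClosed_closure
end

section
/- For any bounded subset M of B(Ω,Y), the Hausdorff measure of noncompactness of M in B(Ω,Y) satisfies γ_B(M) ≤ μ_γ(M) + ω_B(M). -/
open Metric Set BoundedContinuousFunction

theorem stmt15 {Ω Y : Type*} [TopologicalSpace Ω] [DiscreteTopology Ω] [Nonempty Ω]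
    [NormedAddCommGroup Y] [NormedSpace ℝ Y] [CompleteSpace Y]
    (M : Set (Ω →ᵇ Y)) (hM : Bornology.IsBounded M) :
    hausMNC M ≤ muGamma M + omegaX Set.univ M := by
  classical
  set s := muGamma M with hsdef
  obtain ⟨C, hC0, hC⟩ : ∃ C, 0 ≤ C ∧ ∀ f ∈ M, ‖f‖ ≤ C := by
    obtain ⟨C, hC⟩ := (isBounded_iff_forall_norm_le).1 hM
    exact ⟨max C 0, le_max_right _ _, fun f hf => (hC f hf).trans (le_max_left _ _)⟩
  -- generic facts about the hausMNC defining sets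
  have hbddBelow : ∀ A : Set (Ω →ᵇ Y), BddBelow {ε : ℝ | 0 < ε ∧ ∃ F : Set (Ω →ᵇ Y),
      F.Finite ∧ F ⊆ Set.univ ∧ A ⊆ ⋃ y ∈ F, Metric.closedBall y ε} :=
    fun A => ⟨0, fun ε hε => hε.1.le⟩
  have hbddBelowY : ∀ A : Set Y, BddBelow {ε : ℝ | 0 < ε ∧ ∃ F : Set Y,
      F.Finite ∧ F ⊆ Set.univ ∧ A ⊆ ⋃ y ∈ F, Metric.closedBall y ε} :=
    fun A => ⟨0, fun ε hε => hε.1.le⟩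
  -- each hausMNC (evalSet M x) is at most C + 1
  have hmemCx : ∀ x : Ω, (C + 1) ∈ {ε : ℝ | 0 < ε ∧ ∃ F : Set Y,
      F.Finite ∧ F ⊆ Set.univ ∧ evalSet M x ⊆ ⋃ y ∈ F, Metric.closedBall y ε} := by
    intro x
    refine ⟨by linarith, {0}, Set.finite_singleton _, Set.subset_univ _, ?_⟩
    rintro y ⟨f, hf, rfl⟩
    refine Set.mem_iUnion₂.2 ⟨0, rfl, ?_⟩
    simp only [Metric.mem_closedBall, dist_zero_right]
    exact (BoundedContinuousFunction.norm_coe_le_norm f x).trans (by linarith [hC f hf])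
  have hxle : ∀ x : Ω, hausMNC (evalSet M x) ≤ C + 1 := fun x =>
    csInf_le (hbddBelowY _) (hmemCx x)
  have hsx : ∀ x : Ω, hausMNC (evalSet M x) ≤ s := by
    intro x
    exact le_ciSup (f := fun x => hausMNC (evalSet M x)) ⟨C + 1, by rintro r ⟨x, rfl⟩; exact hxle x⟩ x
  have hhnonneg : ∀ A : Set Y, 0 ≤ hausMNC A := fun A =>
    Real.sInf_nonneg (fun ε hε => hε.1.le)
  have hs0 : 0 ≤ s := (hhnonneg _).trans (hsx (Classical.arbitrary Ω))
  -- trivial case M = ∅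
  have homega0 : 0 ≤ omegaX (Set.univ : Set (Ω →ᵇ Y)) M :=
    Real.sInf_nonneg (fun ε hε => hε.1.le)
  rcases M.eq_empty_or_nonempty with hMe | hMne
  · have h0 : hausMNC M ≤ s := by
      refine le_of_forall_pos_le_add fun η hη => ?_
      refine csInf_le (hbddBelow _) ⟨by linarith, ∅, Set.finite_empty, Set.empty_subset _, ?_⟩
      simp [hMe]
    linarith
  -- omega set is nonempty
  set W : Set ℝ := {ε : ℝ | 0 < ε ∧ ∃ (n : ℕ) (A : Fin n → Set Ω), IsPartition A ∧
    ∃ (m : ℕ) (φ : Fin m → (Ω →ᵇ Y)), (∀ j, φ j ∈ (Set.univ : Set (Ω →ᵇ Y))) ∧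
      ∀ f ∈ M, ∃ j, ∀ i, Metric.diam ((⇑(f - φ j) : Ω → Y) '' A i) ≤ ε} with hWdef
  have hWne : W.Nonempty := by
    refine ⟨2 * C + 1, by linarith, 1, fun _ => Set.univ, ⟨Set.iUnion_const _, Subsingleton.pairwise⟩,
      1, fun _ => 0, fun _ => Set.mem_univ _, fun f hf => ⟨0, fun i => ?_⟩⟩
    refine Metric.diam_le_of_forall_dist_le (by linarith) ?_
    rintro a ⟨x, -, rfl⟩ b ⟨y, -, rfl⟩
    have h1 : ‖(f - 0 : Ω →ᵇ Y) x‖ ≤ C := by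
      simpa using (BoundedContinuousFunction.norm_coe_le_norm f x).trans (hC f hf)
    have h2 : ‖(f - 0 : Ω →ᵇ Y) y‖ ≤ C := by
      simpa using (BoundedContinuousFunction.norm_coe_le_norm f y).trans (hC f hf)
    calc dist ((f - 0 : Ω →ᵇ Y) x) ((f - 0 : Ω →ᵇ Y) y) ≤ _ + _ := dist_le_norm_add_norm _ _
      _ ≤ 2 * C + 1 := by linarith
  -- main step
  have main : ∀ ε ∈ W, ∀ η > 0, hausMNC M ≤ s + ε + η := by
    intro ε hε η hη
    obtain ⟨hε0, n, A, hA, m, φ, -, hφ⟩ := hε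
    have hcov : ∀ x : Ω, ∃ i, x ∈ A i := by
      intro x
      have : x ∈ ⋃ i, A i := hA.1.symm ▸ Set.mem_univ x
      exact Set.mem_iUnion.1 this
    choose idx hidx using hcov
    haveI hn : Nonempty (Fin n) := ⟨idx (Classical.arbitrary Ω)⟩
    set pt : Fin n → Ω := fun i =>
      if h : (A i).Nonempty then h.choose else Classical.arbitrary Ω with hptdef
    have hpt : ∀ x, pt (idx x) ∈ A (idx x) := by
      intro x
      have h : (A (idx x)).Nonempty := ⟨x, hidx x⟩
      simp only [hptdef, dif_pos h]
      exact h.choose_spec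
    -- nets at the base points
    have hnet : ∀ i : Fin n, ∃ (r : ℝ) (F : Set Y), 0 < r ∧ r ≤ s + η ∧ F.Finite ∧
        evalSet M (pt i) ⊆ ⋃ y ∈ F, Metric.closedBall y r := by
      intro i
      have h1 : hausMNC (evalSet M (pt i)) < s + η := lt_of_le_of_lt (hsx _) (by linarith)
      obtain ⟨r, hrmem, hr⟩ := exists_lt_of_csInf_lt ⟨C + 1, hmemCx (pt i)⟩ h1
      obtain ⟨hr0, F, hFfin, -, hFsub⟩ := hrmem
      exact ⟨r, F, hr0, hr.le, hFfin, hFsub⟩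
    choose r F hr0 hrle hFfin hFsub using hnet
    -- the net functions
    set g : Fin m → (Fin n → Y) → (Ω →ᵇ Y) := fun j c =>
      φ j + BoundedContinuousFunction.ofNormedAddCommGroup
        (fun x => c (idx x) - φ j (pt (idx x))) continuous_of_discreteTopology
        (Finset.univ.sup' Finset.univ_nonempty fun i => ‖c i - φ j (pt i)‖)
        (fun x => Finset.le_sup' (f := fun i => ‖c i - φ j (pt i)‖) (Finset.mem_univ (idx x)))
      with hgdef
    have hgapp : ∀ j c x, g j c x = φ j x + (c (idx x) - φ j (pt (idx x))) := by
      intro j c x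
      simp [hgdef]
    set T : Set (Fin m × (Fin n → Y)) := Set.univ ×ˢ Set.pi Set.univ (fun i => F i) with hTdef
    have hT : T.Finite := Set.Finite.prod Set.finite_univ (Set.Finite.pi fun i => hFfin i)
    set N : Set (Ω →ᵇ Y) := (fun p : Fin m × (Fin n → Y) => g p.1 p.2) '' T with hNdef
    refine csInf_le (hbddBelow _) ⟨by linarith, N, hT.image _, Set.subset_univ _, ?_⟩
    intro f hf
    obtain ⟨j, hj⟩ := hφ f hf
    have hc : ∀ i, ∃ y ∈ F i, f (pt i) ∈ Metric.closedBall y (r i) := by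
      intro i
      have hmem : f (pt i) ∈ evalSet M (pt i) := ⟨f, hf, rfl⟩
      simpa using hFsub i hmem
    choose c hcF hcB using hc
    refine Set.mem_iUnion₂.2 ⟨g j c, ⟨⟨j, c⟩, ⟨Set.mem_univ _, fun i _ => hcF i⟩, rfl⟩, ?_⟩
    rw [Metric.mem_closedBall]
    refine (BoundedContinuousFunction.dist_le (by linarith)).2 fun x => ?_
    have key : f x - g j c x = ((f - φ j) x - (f - φ j) (pt (idx x)))
        + (f (pt (idx x)) - c (idx x)) := by
      rw [hgapp]
      simp only [BoundedContinuousFunction.sub_apply]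
      abel
    have hb : Bornology.IsBounded ((⇑(f - φ j) : Ω → Y) '' A (idx x)) :=
      (BoundedContinuousFunction.isBounded_range (f - φ j)).subset
        (Set.image_subset_range _ _)
    have h1 : ‖(f - φ j) x - (f - φ j) (pt (idx x))‖ ≤ ε := by
      rw [← dist_eq_norm]
      exact (Metric.dist_le_diam_of_mem hb ⟨x, hidx x, rfl⟩ ⟨pt (idx x), hpt x, rfl⟩).trans
        (hj (idx x))
    have h2 : ‖f (pt (idx x)) - c (idx x)‖ ≤ s + η := by
      rw [← dist_eq_norm]
      exact (Metric.mem_closedBall.1 (hcB (idx x))).trans (hrle (idx x))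
    calc dist (f x) (g j c x) = ‖f x - g j c x‖ := dist_eq_norm _ _
      _ ≤ ‖(f - φ j) x - (f - φ j) (pt (idx x))‖ + ‖f (pt (idx x)) - c (idx x)‖ := by
          rw [key]; exact norm_add_le _ _
      _ ≤ s + ε + η := by linarith
  -- conclude
  have step2 : ∀ ε ∈ W, hausMNC M ≤ s + ε := by
    intro ε hε
    refine le_of_forall_pos_le_add fun η hη => ?_
    have := main ε hε η hη
    linarith
  have : hausMNC M - s ≤ sInf W := by
    refine le_csInf hWne fun ε hε => ?_
    have := step2 ε hε
    linarith
  have hW : omegaX (Set.univ : Set (Ω →ᵇ Y)) M = sInf W := rfl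
  rw [hW]
  linarith
end

section
/- For any bounded subset M of a Banach subspace X of B(Ω,Y), max{μ_γ(M), (1/2) ω_X(M)} ≤ γ_X(M) ≤ 2(μ_γ(M) + ω_X(M)), where γ_X is the Hausdorff measure of noncompactness in X. -/
open Metric Set BoundedContinuousFunction

section Helpers

variable {E : Type*} [PseudoMetricSpace E]

lemma haus_bddBelow (S A : Set E) : BddBelow {ε : ℝ | 0 < ε ∧ ∃ F : Set E, F.Finite ∧ F ⊆ S ∧
    A ⊆ ⋃ y ∈ F, Metric.closedBall y ε} :=
  ⟨0, fun _ hε => hε.1.le⟩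

lemma hausMNCin_nonneg (S A : Set E) : 0 ≤ hausMNCin S A :=
  Real.sInf_nonneg fun _ hε => hε.1.le

lemma hausMNC_nonneg (A : Set E) : 0 ≤ hausMNC A := hausMNCin_nonneg _ _

lemma hausMNCin_le {S A : Set E} {ε : ℝ} (hε : 0 < ε) (F : Set E) (hF : F.Finite) (hFS : F ⊆ S)
    (hcov : A ⊆ ⋃ y ∈ F, Metric.closedBall y ε) : hausMNCin S A ≤ ε :=
  csInf_le (haus_bddBelow S A) ⟨hε, F, hF, hFS, hcov⟩

lemma hausMNC_le {A : Set E} {ε : ℝ} (hε : 0 < ε) (F : Set E) (hF : F.Finite)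
    (hcov : A ⊆ ⋃ y ∈ F, Metric.closedBall y ε) : hausMNC A ≤ ε :=
  hausMNCin_le hε F hF (subset_univ _) hcov

lemma haus_adm_nonempty {S A : Set E} (hAS : A ⊆ S) (hA : Bornology.IsBounded A) :
    {ε : ℝ | 0 < ε ∧ ∃ F : Set E, F.Finite ∧ F ⊆ S ∧
      A ⊆ ⋃ y ∈ F, Metric.closedBall y ε}.Nonempty := by
  rcases A.eq_empty_or_nonempty with h | ⟨a, ha⟩
  · exact ⟨1, one_pos, ∅, finite_empty, empty_subset _, by simp [h]⟩
  · obtain ⟨C, hC⟩ := Metric.isBounded_iff.mp hA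
    have hC0 : 0 ≤ C := le_trans dist_nonneg (hC ha ha)
    refine ⟨C + 1, by linarith, {a}, finite_singleton a,
      singleton_subset_iff.mpr (hAS ha), fun x hx => ?_⟩
    rw [biUnion_singleton, mem_closedBall]
    exact le_trans (hC hx ha) (by linarith)

lemma haus_exists_net {S A : Set E}
    (hne : {ε : ℝ | 0 < ε ∧ ∃ F : Set E, F.Finite ∧ F ⊆ S ∧
      A ⊆ ⋃ y ∈ F, Metric.closedBall y ε}.Nonempty)
    {ε : ℝ} (h : hausMNCin S A < ε) :
    ∃ F : Set E, F.Finite ∧ F ⊆ S ∧ A ⊆ ⋃ y ∈ F, Metric.closedBall y ε := by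
  obtain ⟨δ, ⟨hδ0, F, hF, hFS, hcov⟩, hδε⟩ := exists_lt_of_csInf_lt hne h
  exact ⟨F, hF, hFS, hcov.trans (iUnion₂_mono fun y _ =>
    closedBall_subset_closedBall hδε.le)⟩

lemma hausMNCin_le_two_hausMNC {S A : Set E} (hAS : A ⊆ S) (hA : Bornology.IsBounded A) :
    hausMNCin S A ≤ 2 * hausMNC A := by
  have h : hausMNCin S A / 2 ≤ hausMNC A := by
    unfold hausMNC hausMNCin
    refine le_csInf (haus_adm_nonempty (subset_univ A) hA) ?_
    rintro ε ⟨hε0, F, hF, -, hcov⟩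
    rw [div_le_iff₀ two_pos]
    have hz : ∀ y : E, ∃ z, ((A ∩ closedBall y ε).Nonempty → z ∈ A ∩ closedBall y ε) := by
      intro y
      by_cases h : (A ∩ closedBall y ε).Nonempty
      · exact ⟨h.some, fun _ => h.some_mem⟩
      · exact ⟨y, fun h' => absurd h' h⟩
    choose z hz using hz
    refine csInf_le ⟨0, fun δ hδ => hδ.1.le⟩
      ⟨by linarith, z '' {y ∈ F | (A ∩ closedBall y ε).Nonempty},
        (hF.subset (sep_subset _ _)).image z, ?_, ?_⟩
    · rintro w ⟨y, ⟨hyF, hy⟩, rfl⟩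
      exact hAS (hz y hy).1
    · intro f hf
      obtain ⟨y, hyF, hfy⟩ := mem_iUnion₂.mp (hcov hf)
      have hyne : (A ∩ closedBall y ε).Nonempty := ⟨f, hf, hfy⟩
      refine mem_iUnion₂.mpr ⟨z y, ⟨y, ⟨hyF, hyne⟩, rfl⟩, mem_closedBall.mpr ?_⟩
      have h1 : dist f y ≤ ε := mem_closedBall.mp hfy
      have h2 : dist (z y) y ≤ ε := mem_closedBall.mp (hz y hyne).2
      calc dist f (z y) ≤ dist f y + dist y (z y) := dist_triangle _ _ _
        _ ≤ ε + ε := add_le_add h1 (by rwa [dist_comm])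
        _ = ε * 2 := by ring
  linarith

end Helpers

section OmegaHelpers

variable {Ω Y : Type*} [TopologicalSpace Ω] [NormedAddCommGroup Y]

lemma evalSet_bounded {M : Set (Ω →ᵇ Y)} (hM : Bornology.IsBounded M) (x : Ω) :
    Bornology.IsBounded (evalSet M x) := by
  obtain ⟨C, hC⟩ := Metric.isBounded_iff.mp hM
  refine Metric.isBounded_iff.mpr ⟨C, ?_⟩
  rintro - ⟨f, hf, rfl⟩ - ⟨g, hg, rfl⟩
  exact (BoundedContinuousFunction.dist_coe_le_dist x).trans (hC hf hg)

lemma muGamma_bddAbove {M : Set (Ω →ᵇ Y)} (hM : Bornology.IsBounded M) :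
    BddAbove (Set.range fun x => hausMNC (evalSet M x)) := by
  obtain ⟨C, hC⟩ := Metric.isBounded_iff.mp hM
  rcases M.eq_empty_or_nonempty with h | ⟨f₀, hf₀⟩
  · refine ⟨1, ?_⟩; rintro r ⟨x, rfl⟩
    exact hausMNC_le one_pos ∅ finite_empty (by simp [evalSet, h])
  · have hC0 : 0 ≤ C := le_trans dist_nonneg (hC hf₀ hf₀)
    refine ⟨C + 1, ?_⟩; rintro r ⟨x, rfl⟩
    refine hausMNC_le (by linarith) {f₀ x} (finite_singleton _) ?_
    rintro - ⟨f, hf, rfl⟩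
    rw [biUnion_singleton, mem_closedBall]
    exact le_trans ((BoundedContinuousFunction.dist_coe_le_dist x).trans (hC hf hf₀)) (by linarith)

lemma muGamma_nonneg (M : Set (Ω →ᵇ Y)) [Nonempty Ω] : 0 ≤ muGamma M :=
  Real.iSup_nonneg fun x => hausMNC_nonneg _

lemma unitPartition : IsPartition (fun _ : Fin 1 => (univ : Set Ω)) :=
  ⟨Set.iUnion_eq_univ_iff.mpr fun x => ⟨0, mem_univ x⟩, fun i j hij => absurd (Subsingleton.elim i j) hij⟩

lemma omega_adm_nonempty {X M : Set (Ω →ᵇ Y)} (hXzero : (0 : Ω →ᵇ Y) ∈ X)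
    (hM : Bornology.IsBounded M) :
    {ε : ℝ | 0 < ε ∧ ∃ (n : ℕ) (A : Fin n → Set Ω), IsPartition A ∧
      ∃ (m : ℕ) (φ : Fin m → (Ω →ᵇ Y)), (∀ j, φ j ∈ X) ∧
        ∀ f ∈ M, ∃ j, ∀ i, Metric.diam ((⇑(f - φ j) : Ω → Y) '' A i) ≤ ε}.Nonempty := by
  rcases M.eq_empty_or_nonempty with h | ⟨f₀, hf₀⟩
  · exact ⟨1, one_pos, 1, fun _ => univ, unitPartition, 1, fun _ => 0,
      fun _ => hXzero, by simp [h]⟩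
  · obtain ⟨C, hC⟩ := Metric.isBounded_iff.mp hM
    have hC0 : 0 ≤ C := le_trans dist_nonneg (hC hf₀ hf₀)
    have hn0 : 0 ≤ ‖f₀‖ := norm_nonneg _
    refine ⟨2 * (‖f₀‖ + C) + 1, by linarith, 1, fun _ => univ, unitPartition, 1,
      fun _ => 0, fun _ => hXzero, ?_⟩
    intro f hf
    refine ⟨0, fun i => ?_⟩
    have hfn : ‖f‖ ≤ ‖f₀‖ + C := by
      have h1 := hC hf hf₀
      calc ‖f‖ = dist f 0 := by rw [dist_zero_right]
        _ ≤ dist f f₀ + dist f₀ 0 := dist_triangle _ _ _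
        _ ≤ C + ‖f₀‖ := add_le_add h1 (le_of_eq (dist_zero_right _))
        _ = ‖f₀‖ + C := by ring
    simp only [sub_zero]
    refine Metric.diam_le_of_forall_dist_le (by linarith) ?_
    rintro - ⟨x, -, rfl⟩ - ⟨y, -, rfl⟩
    calc dist (f x) (f y) ≤ ‖f x‖ + ‖f y‖ := dist_le_norm_add_norm _ _
      _ ≤ ‖f‖ + ‖f‖ := add_le_add (f.norm_coe_le_norm x) (f.norm_coe_le_norm y)
      _ ≤ 2 * (‖f₀‖ + C) + 1 := by linarith

lemma muGamma_le [Nonempty Ω] {S M : Set (Ω →ᵇ Y)} (hMS : M ⊆ S)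
    (hM : Bornology.IsBounded M) : muGamma M ≤ hausMNCin S M := by
  unfold hausMNCin
  refine le_csInf (haus_adm_nonempty hMS hM) ?_
  rintro ε ⟨hε0, F, hF, -, hcov⟩
  refine ciSup_le fun x => ?_
  refine hausMNC_le hε0 ((fun g : Ω →ᵇ Y => g x) '' F) (hF.image _) ?_
  rintro - ⟨f, hf, rfl⟩
  obtain ⟨g, hgF, hfg⟩ := mem_iUnion₂.mp (hcov hf)
  exact mem_iUnion₂.mpr ⟨g x, mem_image_of_mem _ hgF, mem_closedBall.mpr
    ((BoundedContinuousFunction.dist_coe_le_dist x).trans (mem_closedBall.mp hfg))⟩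

lemma omegaX_le_aux {X M : Set (Ω →ᵇ Y)} (hMX : M ⊆ X) (hM : Bornology.IsBounded M) :
    omegaX X M / 2 ≤ hausMNCin X M := by
  unfold hausMNCin
  refine le_csInf (haus_adm_nonempty hMX hM) ?_
  rintro ε ⟨hε0, F, hF, hFX, hcov⟩
  rw [div_le_iff₀ two_pos]
  unfold omegaX
  refine csInf_le ⟨0, fun δ hδ => hδ.1.le⟩ ?_
  obtain ⟨m, e, he⟩ := hF.fin_embedding
  refine ⟨by linarith, 1, fun _ => univ, unitPartition, m, fun j => e j,
    fun j => hFX (he ▸ mem_range_self j), ?_⟩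
  intro f hf
  obtain ⟨g, hgF, hfg⟩ := mem_iUnion₂.mp (hcov hf)
  obtain ⟨j, rfl⟩ : ∃ j, e j = g := by rwa [← he] at hgF
  refine ⟨j, fun i => ?_⟩
  have hd : dist f (e j) ≤ ε := mem_closedBall.mp hfg
  have h1 : ∀ w : Ω, ‖(f - e j) w‖ ≤ ε := by
    intro w
    rw [BoundedContinuousFunction.coe_sub, Pi.sub_apply, ← dist_eq_norm]
    exact (BoundedContinuousFunction.dist_coe_le_dist w).trans hd
  refine Metric.diam_le_of_forall_dist_le (by linarith) ?_
  rintro - ⟨x, -, rfl⟩ - ⟨y, -, rfl⟩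
  calc dist ((f - e j) x) ((f - e j) y) ≤ ‖(f - e j) x‖ + ‖(f - e j) y‖ :=
        dist_le_norm_add_norm _ _
    _ ≤ ε + ε := add_le_add (h1 x) (h1 y)
    _ = ε * 2 := by ring

end OmegaHelpers

lemma hausMNC_le_of_mu_omega {Ω Y : Type*} [TopologicalSpace Ω] [DiscreteTopology Ω] [Nonempty Ω]
    [NormedAddCommGroup Y] {M : Set (Ω →ᵇ Y)} (hM : Bornology.IsBounded M)
    {ε1 ε2 : ℝ} (hε1 : muGamma M < ε1) (hε2 : 0 < ε2)
    {n : ℕ} {A : Fin n → Set Ω} (hA : IsPartition A)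
    {m : ℕ} {φ : Fin m → (Ω →ᵇ Y)}
    (hφ : ∀ f ∈ M, ∃ j, ∀ i, Metric.diam ((⇑(f - φ j) : Ω → Y) '' A i) ≤ ε2) :
    hausMNC M ≤ ε1 + ε2 := by
  classical
  have hε10 : 0 < ε1 := lt_of_le_of_lt (muGamma_nonneg M) hε1
  choose idx hidx using (Set.iUnion_eq_univ_iff.mp hA.1 : ∀ x : Ω, ∃ i, x ∈ A i)
  haveI : Nonempty (Fin n) := ⟨idx (Classical.arbitrary Ω)⟩
  obtain ⟨pt, hpt⟩ : ∃ pt : Fin n → Ω, ∀ i, (A i).Nonempty → pt i ∈ A i :=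
    ⟨fun i => if h : (A i).Nonempty then h.some else Classical.arbitrary Ω,
     fun i h => by simp only [dif_pos h]; exact h.some_mem⟩
  have hnet : ∀ i : Fin n, ∃ F : Set Y, F.Finite ∧
      evalSet M (pt i) ⊆ ⋃ y ∈ F, Metric.closedBall y ε1 := by
    intro i
    have hlt : hausMNC (evalSet M (pt i)) < ε1 :=
      lt_of_le_of_lt (le_ciSup (muGamma_bddAbove hM) (pt i)) hε1
    obtain ⟨F, hF, -, hcov⟩ := haus_exists_net
      (haus_adm_nonempty (subset_univ _) (evalSet_bounded hM (pt i))) hlt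
    exact ⟨F, hF, hcov⟩
  choose Fnet hFfin hFcov using hnet
  let g : Fin m × (Fin n → Y) → (Ω →ᵇ Y) := fun p =>
    BoundedContinuousFunction.ofNormedAddCommGroup
      (fun x => φ p.1 x + (p.2 (idx x) - φ p.1 (pt (idx x))))
      continuous_of_discreteTopology
      (‖φ p.1‖ + Finset.univ.sup' Finset.univ_nonempty fun i => ‖p.2 i - φ p.1 (pt i)‖)
      (fun x => (norm_add_le _ _).trans (add_le_add ((φ p.1).norm_coe_le_norm x)
        (Finset.le_sup' (f := fun i => ‖p.2 i - φ p.1 (pt i)‖) (Finset.mem_univ (idx x)))))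
  have hgx : ∀ p x, g p x = φ p.1 x + (p.2 (idx x) - φ p.1 (pt (idx x))) := fun p x => by
    simp only [g, BoundedContinuousFunction.coe_ofNormedAddCommGroup]
  refine hausMNC_le (by linarith) (g '' ((univ : Set (Fin m)) ×ˢ Set.pi univ Fnet))
    ((Set.finite_univ.prod (Set.Finite.pi hFfin)).image g) ?_
  intro f hf
  obtain ⟨j, hj⟩ := hφ f hf
  have hσ : ∀ i : Fin n, ∃ y, y ∈ Fnet i ∧ dist (f (pt i)) y ≤ ε1 := by
    intro i
    obtain ⟨y, hy, hdy⟩ := mem_iUnion₂.mp (hFcov i ⟨f, hf, rfl⟩)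
    exact ⟨y, hy, mem_closedBall.mp hdy⟩
  choose σ hσmem hσdist using hσ
  refine mem_iUnion₂.mpr ⟨g (j, σ), mem_image_of_mem g ⟨mem_univ j, fun i _ => hσmem i⟩,
    mem_closedBall.mpr ?_⟩
  refine (BoundedContinuousFunction.dist_le (by linarith)).mpr fun x => ?_
  have hx : x ∈ A (idx x) := hidx x
  have hptx : pt (idx x) ∈ A (idx x) := hpt _ ⟨x, hx⟩
  have hbdd : Bornology.IsBounded ((⇑(f - φ j) : Ω → Y) '' A (idx x)) :=
    ((f - φ j).isBounded_range).subset (image_subset_range _ _)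
  have h1 : dist ((f - φ j) x) ((f - φ j) (pt (idx x))) ≤ ε2 :=
    (Metric.dist_le_diam_of_mem hbdd (mem_image_of_mem _ hx)
      (mem_image_of_mem _ hptx)).trans (hj (idx x))
  have h1' : ‖f x - φ j x - (f (pt (idx x)) - φ j (pt (idx x)))‖ ≤ ε2 := by
    simpa [BoundedContinuousFunction.coe_sub, Pi.sub_apply, dist_eq_norm] using h1
  have h2 : ‖f (pt (idx x)) - σ (idx x)‖ ≤ ε1 := by
    rw [← dist_eq_norm]; exact hσdist (idx x)
  calc dist (f x) (g (j, σ) x)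
      = ‖(f x - φ j x - (f (pt (idx x)) - φ j (pt (idx x)))) + (f (pt (idx x)) - σ (idx x))‖ := by
        rw [dist_eq_norm, hgx]; congr 1; abel
    _ ≤ ‖f x - φ j x - (f (pt (idx x)) - φ j (pt (idx x)))‖ + ‖f (pt (idx x)) - σ (idx x)‖ :=
        norm_add_le _ _
    _ ≤ ε2 + ε1 := add_le_add h1' h2
    _ = ε1 + ε2 := by ring


theorem stmt16 {Ω Y : Type*} [TopologicalSpace Ω] [DiscreteTopology Ω] [Nonempty Ω]
    [NormedAddCommGroup Y] [NormedSpace ℝ Y] [CompleteSpace Y]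
    (X : Submodule ℝ (Ω →ᵇ Y)) (hX : IsClosed (X : Set (Ω →ᵇ Y)))
    (M : Set (Ω →ᵇ Y)) (hMX : M ⊆ (X : Set (Ω →ᵇ Y))) (hM : Bornology.IsBounded M) :
    max (muGamma M) (omegaX (X : Set (Ω →ᵇ Y)) M / 2) ≤ hausMNCin (X : Set (Ω →ᵇ Y)) M ∧
      hausMNCin (X : Set (Ω →ᵇ Y)) M ≤ 2 * (muGamma M + omegaX (X : Set (Ω →ᵇ Y)) M) := by
  have hTωne := omega_adm_nonempty (X := (X : Set (Ω →ᵇ Y))) X.zero_mem hM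
  constructor
  · exact max_le (muGamma_le hMX hM) (omegaX_le_aux hMX hM)
  · have h2 : hausMNCin (X : Set (Ω →ᵇ Y)) M ≤ 2 * hausMNC M :=
      hausMNCin_le_two_hausMNC hMX hM
    have key2 : ∀ ε2 : ℝ, (0 < ε2 ∧ ∃ (n : ℕ) (A : Fin n → Set Ω), IsPartition A ∧
        ∃ (m : ℕ) (φ : Fin m → (Ω →ᵇ Y)), (∀ j, φ j ∈ (X : Set (Ω →ᵇ Y))) ∧
          ∀ f ∈ M, ∃ j, ∀ i, Metric.diam ((⇑(f - φ j) : Ω → Y) '' A i) ≤ ε2) →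
        hausMNC M ≤ muGamma M + ε2 := by
      rintro ε2 ⟨hε20, n, A, hA, m, φ, hφX, hφ⟩
      refine le_of_forall_pos_le_add fun δ hδ => ?_
      have := hausMNC_le_of_mu_omega hM (lt_add_of_pos_right (muGamma M) hδ) hε20 hA hφ
      linarith
    have hω : hausMNC M - muGamma M ≤ omegaX (X : Set (Ω →ᵇ Y)) M := by
      unfold omegaX
      exact le_csInf hTωne fun ε2 hε2 => by linarith [key2 ε2 hε2]
    linarith
end

section
/- If M is a bounded subset of B(Ω,Y) with ω_B(M) = 0, then the Hausdorff measure of noncompactness of M in B(Ω,Y) equals μ_γ(M) = sup_{x ∈ Ω} γ(M(x)). -/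
open Metric Set BoundedContinuousFunction

theorem stmt17 {Ω Y : Type*} [TopologicalSpace Ω] [DiscreteTopology Ω] [Nonempty Ω]
    [NormedAddCommGroup Y] [NormedSpace ℝ Y] [CompleteSpace Y]
    (M : Set (Ω →ᵇ Y)) (hM : Bornology.IsBounded M) (hω : omegaX Set.univ M = 0) :
    hausMNC M = muGamma M := by
  classical
  obtain ⟨C, hC0, hC⟩ : ∃ C : ℝ, 0 ≤ C ∧ ∀ f ∈ M, ‖f‖ ≤ C := by
    obtain ⟨C, hC⟩ := hM.exists_norm_le
    exact ⟨max C 0, le_max_right _ _, fun f hf => (hC f hf).trans (le_max_left _ _)⟩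
  -- the defining set for `hausMNC M`
  set TM : Set ℝ := {ε : ℝ | 0 < ε ∧ ∃ F : Set (Ω →ᵇ Y), F.Finite ∧ F ⊆ Set.univ ∧
    M ⊆ ⋃ y ∈ F, Metric.closedBall y ε} with hTMdef
  have hhaus : hausMNC M = sInf TM := rfl
  have hTM_bdd : BddBelow TM := ⟨0, fun t ht => ht.1.le⟩
  have hTM_ne : TM.Nonempty := by
    refine ⟨C + 1, by positivity, {0}, finite_singleton _, subset_univ _, fun f hf => ?_⟩
    simp only [mem_iUnion, mem_singleton_iff, exists_prop, mem_closedBall]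
    exact ⟨0, rfl, by simpa [dist_eq_norm] using (hC f hf).trans (by linarith)⟩
  -- pointwise sets
  have hTx_bdd : ∀ x : Ω, BddBelow {ε : ℝ | 0 < ε ∧ ∃ F : Set Y, F.Finite ∧ F ⊆ Set.univ ∧
      evalSet M x ⊆ ⋃ y ∈ F, Metric.closedBall y ε} := fun x => ⟨0, fun t ht => ht.1.le⟩
  have hTx_ne : ∀ x : Ω, ({ε : ℝ | 0 < ε ∧ ∃ F : Set Y, F.Finite ∧ F ⊆ Set.univ ∧
      evalSet M x ⊆ ⋃ y ∈ F, Metric.closedBall y ε}).Nonempty := by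
    intro x
    refine ⟨C + 1, by positivity, {0}, finite_singleton _, subset_univ _, ?_⟩
    rintro y ⟨f, hf, rfl⟩
    simp only [mem_iUnion, mem_singleton_iff, exists_prop, mem_closedBall]
    refine ⟨0, rfl, ?_⟩
    have := (f.norm_coe_le_norm x).trans (hC f hf)
    simpa [dist_eq_norm] using this.trans (by linarith)
  -- easy direction, pointwise
  have heasy : ∀ x : Ω, hausMNC (evalSet M x) ≤ hausMNC M := by
    intro x
    rw [hhaus]
    refine csInf_le_csInf (hTx_bdd x) hTM_ne ?_
    rintro ε ⟨hε, F, hFfin, -, hFcov⟩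
    refine ⟨hε, (fun φ : Ω →ᵇ Y => φ x) '' F, hFfin.image _, subset_univ _, ?_⟩
    rintro y ⟨f, hf, rfl⟩
    obtain ⟨φ, hφF, hfφ⟩ := by simpa only [mem_iUnion, exists_prop] using hFcov hf
    refine mem_iUnion₂.2 ⟨φ x, mem_image_of_mem _ hφF, ?_⟩
    exact mem_closedBall.2 ((BoundedContinuousFunction.dist_coe_le_dist x).trans hfφ)
  have hμ0 : 0 ≤ muGamma M :=
    Real.iSup_nonneg fun x => Real.sInf_nonneg fun ε hε => hε.1.le
  have hbdd : BddAbove (Set.range fun x : Ω => hausMNC (evalSet M x)) := by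
    refine ⟨hausMNC M, ?_⟩
    rintro t ⟨x, rfl⟩
    exact heasy x
  have h1 : muGamma M ≤ hausMNC M := ciSup_le heasy
  have h2 : hausMNC M ≤ muGamma M := by
    refine le_of_forall_pos_le_add fun δ hδ => ?_
    -- extract partition and φ's with ε < δ/2 from ω = 0
    set Sω : Set ℝ := {ε : ℝ | 0 < ε ∧ ∃ (n : ℕ) (A : Fin n → Set Ω), IsPartition A ∧
      ∃ (m : ℕ) (φ : Fin m → (Ω →ᵇ Y)), (∀ j, φ j ∈ (Set.univ : Set (Ω →ᵇ Y))) ∧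
        ∀ f ∈ M, ∃ j, ∀ i, Metric.diam ((⇑(f - φ j) : Ω → Y) '' A i) ≤ ε} with hSωdef
    have hωS : sInf Sω = 0 := hω
    have hSω_ne : Sω.Nonempty := by
      refine ⟨2 * C + 1, by positivity, 1, fun _ => Set.univ,
        ⟨Set.iUnion_const _, Subsingleton.pairwise⟩, 1, fun _ => 0, fun j => mem_univ _,
        fun f hf => ⟨0, fun i => ?_⟩⟩
      have hsub : (⇑(f - 0) : Ω → Y) '' Set.univ ⊆ Metric.closedBall 0 C := by
        rintro y ⟨z, -, rfl⟩
        simp only [sub_zero]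
        exact mem_closedBall_zero_iff.2 ((f.norm_coe_le_norm z).trans (hC f hf))
      calc Metric.diam ((⇑(f - 0) : Ω → Y) '' Set.univ)
          ≤ Metric.diam (Metric.closedBall (0 : Y) C) :=
            Metric.diam_mono hsub Metric.isBounded_closedBall
        _ ≤ 2 * C + 1 := le_trans (Metric.diam_closedBall hC0) (by linarith)
    have hlt : sInf Sω < δ / 2 := by rw [hωS]; linarith
    obtain ⟨ε, hεS, hεδ⟩ := (csInf_lt_iff ⟨0, fun t ht => ht.1.le⟩ hSω_ne).1 hlt
    obtain ⟨hε0, n, A, ⟨hAcov, -⟩, m, φ, -, hφ⟩ := hεS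
    -- index function and representative points
    have hcov : ∀ x : Ω, ∃ i, x ∈ A i := fun x => by
      have : x ∈ ⋃ i, A i := hAcov ▸ mem_univ x
      exact mem_iUnion.1 this
    choose idx hidx using hcov
    have hpick : ∀ i : Fin n, ∃ z : Ω, (A i).Nonempty → z ∈ A i := by
      intro i
      by_cases h : (A i).Nonempty
      · exact ⟨h.choose, fun _ => h.choose_spec⟩
      · exact ⟨Classical.arbitrary Ω, fun h' => absurd h' h⟩
    choose p hp using hpick
    set r : ℝ := muGamma M + δ / 2 with hrdef
    have hr0 : 0 < r := by rw [hrdef]; linarith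
    -- pointwise nets of radius r
    have hnet : ∀ i : Fin n, ∃ F : Set Y, F.Finite ∧
        evalSet M (p i) ⊆ ⋃ y ∈ F, Metric.closedBall y r := by
      intro i
      have hle : hausMNC (evalSet M (p i)) ≤ muGamma M := le_ciSup hbdd (p i)
      have hlt2 : hausMNC (evalSet M (p i)) < r := lt_of_le_of_lt hle (by rw [hrdef]; linarith)
      obtain ⟨t, ⟨ht0, F, hFfin, -, hFcov⟩, htlt⟩ :=
        (csInf_lt_iff (hTx_bdd (p i)) (hTx_ne (p i))).1 hlt2
      refine ⟨F, hFfin, hFcov.trans ?_⟩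
      exact iUnion₂_mono fun y _ => Metric.closedBall_subset_closedBall htlt.le
    choose Fnet hFfin hFcov using hnet
    -- the candidate net functions
    have hgbound : ∀ (j : Fin m) (c : Fin n → Y) (x : Ω),
        ‖φ j x + (c (idx x) - φ j (p (idx x)))‖ ≤
          ‖φ j‖ + ∑ i : Fin n, (‖c i‖ + ‖φ j (p i)‖) := by
      intro j c x
      calc ‖φ j x + (c (idx x) - φ j (p (idx x)))‖
          ≤ ‖φ j x‖ + ‖c (idx x) - φ j (p (idx x))‖ := norm_add_le _ _
        _ ≤ ‖φ j‖ + (‖c (idx x)‖ + ‖φ j (p (idx x))‖) :=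
            add_le_add ((φ j).norm_coe_le_norm x) (norm_sub_le _ _)
        _ ≤ ‖φ j‖ + ∑ i : Fin n, (‖c i‖ + ‖φ j (p i)‖) := by
            refine add_le_add le_rfl ?_
            exact Finset.single_le_sum (f := fun i : Fin n => ‖c i‖ + ‖φ j (p i)‖)
              (fun i _ => by positivity) (Finset.mem_univ (idx x))
    let gfun : Fin m → (Fin n → Y) → (Ω →ᵇ Y) := fun j c =>
      BoundedContinuousFunction.ofNormedAddCommGroup
        (fun x => φ j x + (c (idx x) - φ j (p (idx x))))
        continuous_of_discreteTopology
        (‖φ j‖ + ∑ i : Fin n, (‖c i‖ + ‖φ j (p i)‖)) (hgbound j c)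
    set G : Set (Ω →ᵇ Y) :=
      (fun q : (Fin m) × (Fin n → Y) => gfun q.1 q.2) ''
        ((Set.univ : Set (Fin m)) ×ˢ (Set.pi Set.univ fun i => Fnet i)) with hGdef
    have hGfin : G.Finite := (Set.finite_univ.prod (Set.Finite.pi hFfin)).image _
    have hcover : M ⊆ ⋃ g ∈ G, Metric.closedBall g (muGamma M + δ) := by
      intro f hf
      obtain ⟨j, hj⟩ := hφ f hf
      have hchoice : ∀ i : Fin n, ∃ y, y ∈ Fnet i ∧ dist (f (p i)) y ≤ r := by
        intro i
        have hmem : f (p i) ∈ evalSet M (p i) := ⟨f, hf, rfl⟩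
        obtain ⟨y, hy, hball⟩ := by
          simpa only [mem_iUnion, exists_prop] using hFcov i hmem
        exact ⟨y, hy, mem_closedBall.1 hball⟩
      choose c hc1 hc2 using hchoice
      refine mem_iUnion₂.2 ⟨gfun j c, ⟨(j, c), ⟨mem_univ _, fun i _ => hc1 i⟩, rfl⟩, ?_⟩
      refine mem_closedBall.2 ?_
      refine (BoundedContinuousFunction.dist_le (by linarith)).2 fun x => ?_
      have hx : x ∈ A (idx x) := hidx x
      have hpAi : p (idx x) ∈ A (idx x) := hp (idx x) ⟨x, hx⟩
      have hbd : Bornology.IsBounded ((⇑(f - φ j) : Ω → Y) '' A (idx x)) :=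
        (f - φ j).isBounded_range.subset (image_subset_range _ _)
      have hdiam : dist ((f - φ j) x) ((f - φ j) (p (idx x))) ≤ ε :=
        (Metric.dist_le_diam_of_mem hbd (mem_image_of_mem _ hx)
          (mem_image_of_mem _ hpAi)).trans (hj (idx x))
      have heq : dist (f x) (gfun j c x) =
          ‖((f x - φ j x) - (f (p (idx x)) - φ j (p (idx x)))) + (f (p (idx x)) - c (idx x))‖ := by
        rw [dist_eq_norm]
        show ‖f x - (φ j x + (c (idx x) - φ j (p (idx x))))‖ = _
        congr 1
        abel
      calc dist (f x) (gfun j c x)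
          ≤ ‖(f x - φ j x) - (f (p (idx x)) - φ j (p (idx x)))‖ +
              ‖f (p (idx x)) - c (idx x)‖ := heq ▸ norm_add_le _ _
        _ ≤ ε + r := by
            refine add_le_add ?_ (by rw [← dist_eq_norm]; exact hc2 (idx x))
            have : ((f - φ j) x) - ((f - φ j) (p (idx x))) =
                (f x - φ j x) - (f (p (idx x)) - φ j (p (idx x))) := by
              simp [BoundedContinuousFunction.sub_apply]
            rw [← this, ← dist_eq_norm]
            exact hdiam
        _ ≤ muGamma M + δ := by rw [hrdef]; linarith
    have hmem : (muGamma M + δ) ∈ TM :=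
      ⟨by linarith, G, hGfin, subset_univ _, hcover⟩
    rw [hhaus]
    exact csInf_le hTM_bdd hmem
  exact le_antisymm h2 h1
end

section
/- If X is a Banach subspace of the space TB(Ω,Y) of totally bounded functions and M ⊆ X is bounded, then σ_γ(M) = γ(M(Ω)) ≤ γ_X(M), where γ_X is the Hausdorff measure of noncompactness in X. -/
open Metric Set BoundedContinuousFunction

theorem stmt18 {Ω Y : Type*} [TopologicalSpace Ω] [DiscreteTopology Ω] [Nonempty Ω]
    [NormedAddCommGroup Y] [NormedSpace ℝ Y] [CompleteSpace Y]
    (X : Submodule ℝ (Ω →ᵇ Y)) (hX : IsClosed (X : Set (Ω →ᵇ Y)))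
    (hXTB : ∀ f : Ω →ᵇ Y, f ∈ X → TotallyBounded (Set.range (f : Ω → Y)))
    (M : Set (Ω →ᵇ Y)) (hMX : M ⊆ (X : Set (Ω →ᵇ Y))) (hM : Bornology.IsBounded M) :
    hausMNC (rangeSet M) ≤ hausMNCin (X : Set (Ω →ᵇ Y)) M := by
  obtain ⟨R, hR, hRsub⟩ := hM.subset_closedBall_lt 0 0
  apply le_csInf
  · refine ⟨R, hR, {0}, Set.finite_singleton 0, by simp [X.zero_mem], ?_⟩
    intro f hf
    simpa using hRsub hf
  rintro ε ⟨hε, F, hFfin, hFX, hcov⟩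
  refine le_of_forall_pos_le_add fun δ hδ => ?_
  -- K = union of ranges of functions in F is totally bounded
  have hK : TotallyBounded (⋃ φ ∈ F, Set.range (⇑φ : Ω → Y)) :=
    (totallyBounded_biUnion hFfin).mpr fun φ hφ => hXTB φ (hFX hφ)
  obtain ⟨t, htfin, htsub⟩ := (totallyBounded_iff.mp hK) δ hδ
  have hbdd : BddBelow {ε : ℝ | 0 < ε ∧ ∃ F : Set Y, F.Finite ∧ F ⊆ Set.univ ∧
      rangeSet M ⊆ ⋃ y ∈ F, Metric.closedBall y ε} :=
    ⟨0, fun x hx => le_of_lt hx.1⟩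
  refine csInf_le hbdd ⟨by positivity, t, htfin, Set.subset_univ t, ?_⟩
  rintro z hz
  simp only [rangeSet, Set.mem_iUnion] at hz
  obtain ⟨f, hfM, x, rfl⟩ := hz
  have := hcov hfM
  simp only [Set.mem_iUnion] at this
  obtain ⟨φ, hφF, hφd⟩ := this
  have hdist : dist (f x) (φ x) ≤ ε :=
    le_trans (BoundedContinuousFunction.dist_coe_le_dist x) hφd
  have hφx : (φ x) ∈ ⋃ φ ∈ F, Set.range (⇑φ : Ω → Y) := by
    exact Set.mem_biUnion hφF ⟨x, rfl⟩
  obtain ⟨y, hyt, hy⟩ := Set.mem_iUnion₂.mp (htsub hφx)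
  refine Set.mem_biUnion hyt ?_
  have : dist (f x) y ≤ dist (f x) (φ x) + dist (φ x) y := dist_triangle _ _ _
  simp only [Metric.mem_closedBall]
  calc dist (f x) y ≤ dist (f x) (φ x) + dist (φ x) y := dist_triangle _ _ _
    _ ≤ ε + δ := add_le_add hdist (le_of_lt hy)
end
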